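/- arXiv:1612.02518 — 11 statements merged into one kernel-verified Lean document; each statement's English description precedes it below -/
import Mathlib

section
/- For all matrices A, B, C, D in SL(2,ℂ), one has 2·tr(ABCD) = tr(A)·tr(B)·tr(C)·tr(D) + tr(A)·tr(BCD) + tr(B)·tr(CDA) + tr(C)·tr(DAB) + tr(D)·tr(ABC) + tr(AB)·tr(CD) + tr(DA)·tr(BC) − tr(AC)·tr(BD) − tr(A)·tr(B)·tr(CD) − tr(AB)·tr(C)·tr(D) − tr(D)·tr(A)·tr(BC) − tr(DA)·tr(B)·tr(C). -/
open Matrix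

/-- Vogt's four-variable trace identity for `A, B, C, D ∈ SL(2,ℂ)`. -/
theorem trace_identity_four (A B C D : Matrix (Fin 2) (Fin 2) ℂ)
    (hA : A.det = 1) (hB : B.det = 1) (hC : C.det = 1) (hD : D.det = 1) :
    2 * (A * B * C * D).trace =
      A.trace * B.trace * C.trace * D.trace
        + A.trace * (B * C * D).trace + B.trace * (C * D * A).trace
        + C.trace * (D * A * B).trace + D.trace * (A * B * C).trace
        + (A * B).trace * (C * D).trace + (D * A).trace * (B * C).trace
        - (A * C).trace * (B * D).trace
        - A.trace * B.trace * (C * D).trace - (A * B).trace * C.trace * D.trace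
        - D.trace * A.trace * (B * C).trace - (D * A).trace * B.trace * C.trace := by
  simp only [Matrix.trace, Matrix.mul_apply, Matrix.diag, Fin.sum_univ_two]
  ring
end

section
/- The map from pairs of 2×2 complex matrices to ℂ⁵ sending (A, B) to (tr(A), tr(B), tr(AB), det(A), det(B)) is surjective: for every (t₁, t₂, t₃, d₁, d₂) ∈ ℂ⁵ there exist 2×2 complex matrices A and B with tr(A) = t₁, tr(B) = t₂, tr(AB) = t₃, det(A) = d₁, and det(B) = d₂. -/
open Matrix

/-- The map `(A, B) ↦ (tr A, tr B, tr (AB), det A, det B)` from pairs of 2×2 complex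
matrices to `ℂ⁵` is surjective. -/
theorem trace_det_invariants_surjective (t₁ t₂ t₃ d₁ d₂ : ℂ) :
    ∃ A B : Matrix (Fin 2) (Fin 2) ℂ,
      A.trace = t₁ ∧ B.trace = t₂ ∧ (A * B).trace = t₃ ∧ A.det = d₁ ∧ B.det = d₂ := by
  by_cases hd₁ : d₁ = 0
  · by_cases hcz : t₃ - t₁ * t₂ = 0
    · -- fully degenerate case: d₁ = 0 and t₃ = t₁ t₂
      refine ⟨!![t₁, 0; 0, 0], !![t₂, 1; -d₂, 0], ?_, ?_, ?_, ?_, ?_⟩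
      · simp [Matrix.trace_fin_two]
      · simp [Matrix.trace_fin_two]
      · simp [Matrix.trace_fin_two, Matrix.mul_apply, Fin.sum_univ_two]
        linear_combination -hcz
      · simp [Matrix.det_fin_two, hd₁]
      · simp [Matrix.det_fin_two]
    · -- d₁ = 0, t₃ ≠ t₁ t₂
      refine ⟨!![0, 0; 1, t₁], !![0, t₃ - t₁ * t₂; -d₂/(t₃ - t₁ * t₂), t₂],
        ?_, ?_, ?_, ?_, ?_⟩
      · simp [Matrix.trace_fin_two]
      · simp [Matrix.trace_fin_two]
      · simp [Matrix.trace_fin_two, Matrix.mul_apply, Fin.sum_univ_two]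
      · simp [Matrix.det_fin_two, hd₁]
      · simp [Matrix.det_fin_two]
        field_simp
  · -- d₁ ≠ 0 : solve the quadratic via a complex square root of the discriminant
    obtain ⟨s, hs⟩ := Complex.isAlgClosed.exists_pow_nat_eq
      ((t₃ - t₁ * t₂) ^ 2 - 4 * d₁ * d₂) (n := 2) (by norm_num)
    refine ⟨!![0, -d₁; 1, t₁],
      !![0, ((t₃ - t₁ * t₂) + s)/2; (-(t₃ - t₁ * t₂) + s)/(2*d₁), t₂],
      ?_, ?_, ?_, ?_, ?_⟩
    · simp [Matrix.trace_fin_two]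
    · simp [Matrix.trace_fin_two]
    · simp [Matrix.trace_fin_two, Matrix.mul_apply, Fin.sum_univ_two]
      field_simp
      ring_nf
    · simp [Matrix.det_fin_two]
    · simp [Matrix.det_fin_two]
      field_simp
      linear_combination -hs
end

section
/- Let B ∈ SL(2,ℂ) be a nonscalar matrix (i.e., B ≠ I and B ≠ −I) and let k ∈ ℂ. If it is not the case that both tr(B) ∈ {2, −2} and k ∈ {2, −2}, then the set { A ∈ SL(2,ℂ) : AB = BA and tr(AB) = k } is finite. -/
open Matrix Polynomial

open Matrix Polynomial

/-- quadratic root-set finiteness -/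
lemma quad_finite (c2 c1 c0 : ℂ) (h2 : c2 ≠ 0) :
    {x : ℂ | c2 * x ^ 2 + c1 * x + c0 = 0}.Finite := by
  have hp : (C c2 * X ^ 2 + C c1 * X + C c0) ≠ 0 := by
    intro hp
    have := congrArg (fun q => Polynomial.coeff q 2) hp
    simp [coeff_one, coeff_X] at this
    exact h2 this
  have := Polynomial.finite_setOf_isRoot hp
  convert this using 1
  ext x
  simp [IsRoot]

lemma key (t k : ℂ) (h : ¬((t = 2 ∨ t = -2) ∧ (k = 2 ∨ k = -2))) :
    {x : ℂ × ℂ | x.1 ^ 2 + x.1 * x.2 * t + x.2 ^ 2 = 1 ∧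
      x.1 * t + x.2 * (t ^ 2 - 2) = k}.Finite := by
  by_cases ht : t = 2 ∨ t = -2
  · -- set is empty
    have hk : ¬(k = 2 ∨ k = -2) := fun hk => h ⟨ht, hk⟩
    convert Set.finite_empty
    ext ⟨a, b⟩
    simp only [Set.mem_setOf_eq, Set.mem_empty_iff_false, iff_false, not_and]
    intro h1 h2
    rcases ht with ht | ht <;> subst ht
    · have hs : (a + b) ^ 2 = 1 := by linear_combination h1
      have hk2 : k ^ 2 = 4 := by linear_combination 4 * hs - (k + 2*a + 2*b) * h2
      have : (k - 2) * (k + 2) = 0 := by linear_combination hk2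
      rcases mul_eq_zero.1 this with h' | h'
      · exact hk (Or.inl (by linear_combination h'))
      · exact hk (Or.inr (by linear_combination h'))
    · have hs : (a - b) ^ 2 = 1 := by linear_combination h1
      have hk2 : k ^ 2 = 4 := by linear_combination 4 * hs - (k - 2*a + 2*b) * h2
      have : (k - 2) * (k + 2) = 0 := by linear_combination hk2
      rcases mul_eq_zero.1 this with h' | h'
      · exact hk (Or.inl (by linear_combination h'))
      · exact hk (Or.inr (by linear_combination h'))
  · push_neg at ht
    obtain ⟨ht2, ht2'⟩ := ht
    by_cases ht0 : t = 0
    · subst ht0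
      -- b = -k/2, a^2 = 1 - b^2
      have : {x : ℂ × ℂ | x.1 ^ 2 + x.1 * x.2 * 0 + x.2 ^ 2 = 1 ∧
          x.1 * 0 + x.2 * ((0:ℂ) ^ 2 - 2) = k} ⊆
          (fun a => (a, -k / 2)) '' {a : ℂ | (1:ℂ) * a ^ 2 + 0 * a + ((-k/2)^2 - 1) = 0} := by
        rintro ⟨a, b⟩ ⟨h1, h2⟩
        have hb : b = -k / 2 := by
          field_simp
          linear_combination -h2
        refine ⟨a, ?_, by simp [hb]⟩
        simp only [Set.mem_setOf_eq]
        rw [← hb]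
        linear_combination h1
      exact Set.Finite.subset ((quad_finite 1 0 _ one_ne_zero).image _) this
    · -- t ≠ 0, t ≠ ±2 : a = (k - b*(t^2-2))/t, b root of quadratic with leading 4 - t^2
      have hlead : (4 - t ^ 2) ≠ 0 := by
        intro hc
        have : (2 - t) * (2 + t) = 0 := by linear_combination hc
        rcases mul_eq_zero.1 this with h' | h'
        · exact ht2 (by linear_combination -h')
        · exact ht2' (by linear_combination h')
      set u : ℂ := t ^ 2 - 2 with hu
      have hsub : {x : ℂ × ℂ | x.1 ^ 2 + x.1 * x.2 * t + x.2 ^ 2 = 1 ∧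
          x.1 * t + x.2 * (t ^ 2 - 2) = k} ⊆
          (fun b => ((k - b * u) / t, b)) ''
            {b : ℂ | (4 - t ^ 2) * b ^ 2 + (k * t ^ 2 - 2 * k * u) * b + (k ^ 2 - t ^ 2) = 0} := by
        rintro ⟨a, b⟩ ⟨h1, h2⟩
        have ha : a = (k - b * u) / t := by
          field_simp
          linear_combination h2
        refine ⟨b, ?_, by show ((k - b * u) / t, b) = (a, b); rw [← ha]⟩
        simp only [Set.mem_setOf_eq]
        have ha' : a * t = k - b * u := by
          field_simp at ha
          linear_combination ha
        -- from h1 * t^2 and substitution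
        linear_combination t ^ 2 * h1 - (k - b * u + a * t + b * t ^ 2) * ha'
      exact Set.Finite.subset ((quad_finite _ _ _ hlead).image _) hsub
open Matrix

lemma comm_span (B A : Matrix (Fin 2) (Fin 2) ℂ)
    (hns : ¬(B 0 1 = 0 ∧ B 1 0 = 0 ∧ B 0 0 = B 1 1))
    (hc : A * B = B * A) : ∃ a b : ℂ, A = a • (1 : Matrix (Fin 2) (Fin 2) ℂ) + b • B := by
  have e00 : A 0 0 * B 0 0 + A 0 1 * B 1 0 = B 0 0 * A 0 0 + B 0 1 * A 1 0 := by
    have := congrFun (congrFun hc 0) 0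
    simpa [Matrix.mul_apply, Fin.sum_univ_two] using this
  have e01 : A 0 0 * B 0 1 + A 0 1 * B 1 1 = B 0 0 * A 0 1 + B 0 1 * A 1 1 := by
    have := congrFun (congrFun hc 0) 1
    simpa [Matrix.mul_apply, Fin.sum_univ_two] using this
  have e10 : A 1 0 * B 0 0 + A 1 1 * B 1 0 = B 1 0 * A 0 0 + B 1 1 * A 1 0 := by
    have := congrFun (congrFun hc 1) 0
    simpa [Matrix.mul_apply, Fin.sum_univ_two] using this
  by_cases hq : B 0 1 = 0
  · by_cases hr : B 1 0 = 0
    · have hps : B 0 0 ≠ B 1 1 := fun hps => hns ⟨hq, hr, hps⟩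
      have hd : B 0 0 - B 1 1 ≠ 0 := sub_ne_zero.2 hps
      have h01 : A 0 1 = 0 := by
        have : A 0 1 * (B 1 1 - B 0 0) = 0 := by
          linear_combination e01 - (A 0 0 - A 1 1) * hq
        rcases mul_eq_zero.1 this with h' | h'
        · exact h'
        · exact absurd (by linear_combination -h') hps
      have h10 : A 1 0 = 0 := by
        have : A 1 0 * (B 0 0 - B 1 1) = 0 := by
          linear_combination e10 - (A 1 1 - A 0 0) * hr
        rcases mul_eq_zero.1 this with h' | h'
        · exact h'
        · exact absurd (by linear_combination h') hps
      refine ⟨A 0 0 - (A 0 0 - A 1 1) / (B 0 0 - B 1 1) * B 0 0,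
        (A 0 0 - A 1 1) / (B 0 0 - B 1 1), ?_⟩
      ext i j
      fin_cases i <;> fin_cases j <;>
          simp only [Matrix.add_apply, Matrix.smul_apply, Matrix.one_apply, smul_eq_mul,
            Fin.mk_zero, Fin.mk_one, if_true, if_false,
            eq_self_iff_true, one_ne_zero, zero_ne_one, reduceIte]
      · field_simp; ring
      · rw [h01, hq]; ring
      · rw [h10, hr]; ring
      · field_simp; ring
    · refine ⟨A 0 0 - A 1 0 / B 1 0 * B 0 0, A 1 0 / B 1 0, ?_⟩
      ext i j
      fin_cases i <;> fin_cases j <;>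
          simp only [Matrix.add_apply, Matrix.smul_apply, Matrix.one_apply, smul_eq_mul,
            Fin.mk_zero, Fin.mk_one, if_true, if_false,
            eq_self_iff_true, one_ne_zero, zero_ne_one, reduceIte]
      · field_simp; ring
      · field_simp
        linear_combination e00
      · field_simp; ring
      · field_simp
        linear_combination e10
  · refine ⟨A 0 0 - A 0 1 / B 0 1 * B 0 0, A 0 1 / B 0 1, ?_⟩
    ext i j
    fin_cases i <;> fin_cases j <;>
        simp only [Matrix.add_apply, Matrix.smul_apply, Matrix.one_apply, smul_eq_mul,
          Fin.mk_zero, Fin.mk_one, if_true, if_false,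
          eq_self_iff_true, one_ne_zero, zero_ne_one, reduceIte]
    · field_simp; ring
    · field_simp; ring
    · field_simp
      linear_combination -e00
    · field_simp
      linear_combination -e01


/-- Let `B ∈ SL(2,ℂ)` be nonscalar (`B ≠ ±I`) and `k ∈ ℂ`.  If it is not the case that
both `tr B ∈ {2, −2}` and `k ∈ {2, −2}`, then the set of `A ∈ SL(2,ℂ)` commuting with `B`
and satisfying `tr(AB) = k` is finite. -/
theorem finite_commuting_with_trace (B : Matrix (Fin 2) (Fin 2) ℂ) (hB : B.det = 1)
    (hB1 : B ≠ 1) (hB2 : B ≠ -1) (k : ℂ)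
    (h : ¬((B.trace = 2 ∨ B.trace = -2) ∧ (k = 2 ∨ k = -2))) :
    {A : Matrix (Fin 2) (Fin 2) ℂ | A.det = 1 ∧ A * B = B * A ∧ (A * B).trace = k}.Finite := by
  have hdet : B 0 0 * B 1 1 - B 0 1 * B 1 0 = 1 := by
    simpa [Matrix.det_fin_two] using hB
  have hns : ¬(B 0 1 = 0 ∧ B 1 0 = 0 ∧ B 0 0 = B 1 1) := by
    rintro ⟨hq, hr, hps⟩
    have hp2 : (B 0 0 - 1) * (B 0 0 + 1) = 0 := by
      linear_combination hdet + B 0 0 * hps + B 1 0 * hq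
    rcases mul_eq_zero.1 hp2 with h' | h'
    · apply hB1
      have h1 : B 0 0 = 1 := by linear_combination h'
      ext i j
      fin_cases i <;> fin_cases j <;>
        simp [hq, hr, h1, ← hps, Matrix.one_apply]
    · apply hB2
      have h1 : B 0 0 = -1 := by linear_combination h'
      ext i j
      fin_cases i <;> fin_cases j <;>
        simp [hq, hr, h1, ← hps, Matrix.one_apply]
  set t := B.trace with hts
  have htrace : t = B 0 0 + B 1 1 := by simp [hts, Matrix.trace_fin_two]
  have hfin := key t k h
  have hsub : {A : Matrix (Fin 2) (Fin 2) ℂ | A.det = 1 ∧ A * B = B * A ∧ (A * B).trace = k} ⊆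
      (fun x : ℂ × ℂ => x.1 • (1 : Matrix (Fin 2) (Fin 2) ℂ) + x.2 • B) ''
        {x : ℂ × ℂ | x.1 ^ 2 + x.1 * x.2 * t + x.2 ^ 2 = 1 ∧
          x.1 * t + x.2 * (t ^ 2 - 2) = k} := by
    rintro A ⟨h1, h2, h3⟩
    obtain ⟨a, b, hA⟩ := comm_span B A hns h2
    refine ⟨(a, b), ⟨?_, ?_⟩, hA.symm⟩
    · have h1' := h1
      rw [hA] at h1'
      simp only [Matrix.det_fin_two, Matrix.add_apply, Matrix.smul_apply, Matrix.one_apply,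
        smul_eq_mul, if_true, if_false, reduceIte, mul_one, mul_zero, add_zero, zero_add,
        one_ne_zero, zero_ne_one] at h1'
      rw [htrace]
      linear_combination h1' - b ^ 2 * hdet
    · have h3' := h3
      rw [hA] at h3'
      simp only [Matrix.trace_fin_two, Matrix.mul_apply, Fin.sum_univ_two, Matrix.add_apply,
        Matrix.smul_apply, Matrix.one_apply, smul_eq_mul, if_true, if_false, reduceIte,
        mul_one, mul_zero, add_zero, zero_add, one_ne_zero, zero_ne_one] at h3'
      rw [htrace]
      linear_combination h3' + 2 * b * hdet
  exact (hfin.image _).subset hsub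
end

section
/- Let k₁, k₂ ∈ ℂ. For every B ∈ SL(2,ℂ) with B ≠ I and B ≠ −I, there exist A₁, A₂ ∈ SL(2,ℂ) with tr(A₁) = k₁, tr(A₂) = k₂, and A₁·A₂ = B. -/
open Matrix

lemma product_key (k₁ k₂ : ℂ) (B : Matrix (Fin 2) (Fin 2) ℂ) (hB : B.det = 1)
    (a b c d : ℂ) (h1 : a + d = k₁) (h2 : a * d - b * c = 1)
    (h3 : d * B 0 0 - b * B 1 0 - c * B 0 1 + a * B 1 1 = k₂) :
    ∃ A₁ A₂ : Matrix (Fin 2) (Fin 2) ℂ,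
      A₁.det = 1 ∧ A₂.det = 1 ∧ A₁.trace = k₁ ∧ A₂.trace = k₂ ∧ A₁ * A₂ = B := by
  refine ⟨!![a, b; c, d], !![d, -b; -c, a] * B, ?_, ?_, ?_, ?_, ?_⟩
  · simp [Matrix.det_fin_two_of]; linear_combination h2
  · rw [Matrix.det_mul, hB, mul_one]
    simp [Matrix.det_fin_two_of]; linear_combination h2
  · simp [Matrix.trace_fin_two_of]; linear_combination h1
  · simp [Matrix.trace_fin_two, Matrix.mul_apply, Matrix.vecMul, dotProduct,
      Fin.sum_univ_two]
    linear_combination h3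
  · have h : !![a, b; c, d] * !![d, -b; -c, a] = 1 := by
      ext i j
      fin_cases i <;> fin_cases j <;>
        simp [Matrix.mul_apply, Fin.sum_univ_two, Matrix.one_apply] <;>
        first
          | linear_combination h2
          | linear_combination -h2
          | linear_combination 2 * h2
          | linear_combination -2 * h2
          | ring
    rw [← mul_assoc, h, one_mul]

/-- For any `k₁, k₂ ∈ ℂ` and any `B ∈ SL(2,ℂ)` with `B ≠ ±I`, there are
`A₁, A₂ ∈ SL(2,ℂ)` with `tr A₁ = k₁`, `tr A₂ = k₂` and `A₁A₂ = B`. -/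
theorem product_two_with_traces (k₁ k₂ : ℂ) (B : Matrix (Fin 2) (Fin 2) ℂ)
    (hB : B.det = 1) (hB1 : B ≠ 1) (hB2 : B ≠ -1) :
    ∃ A₁ A₂ : Matrix (Fin 2) (Fin 2) ℂ,
      A₁.det = 1 ∧ A₂.det = 1 ∧ A₁.trace = k₁ ∧ A₂.trace = k₂ ∧ A₁ * A₂ = B := by
  obtain ⟨δ, hδ⟩ : ∃ δ : ℂ, δ ^ 2 = k₁ ^ 2 - 4 := IsAlgClosed.exists_pow_nat_eq (k₁ ^ 2 - 4) (n := 2) (by norm_num)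
  by_cases hr : B 1 0 ≠ 0
  · refine product_key k₁ k₂ B hB ((k₁ + δ) / 2)
      (((k₁ + δ) / 2 * B 1 1 + (k₁ - δ) / 2 * B 0 0 - k₂) / B 1 0) 0 ((k₁ - δ) / 2)
      (by ring) (by field_simp; linear_combination -B 1 0 * hδ) (by field_simp; ring)
  · push_neg at hr
    by_cases hq : B 0 1 ≠ 0
    · refine product_key k₁ k₂ B hB ((k₁ + δ) / 2) 0
        (((k₁ - δ) / 2 * B 0 0 + (k₁ + δ) / 2 * B 1 1 - k₂) / B 0 1) ((k₁ - δ) / 2)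
        (by ring) (by field_simp; linear_combination -B 0 1 * hδ) (by field_simp; ring)
    · push_neg at hq
      have hdet : B 0 0 * B 1 1 = 1 := by
        have h := hB
        rw [Matrix.det_fin_two, hq] at h
        linear_combination h
      have hps : B 0 0 ≠ B 1 1 := by
        intro h
        rcases mul_eq_zero.mp (show (B 0 0 - 1) * (B 0 0 + 1) = 0 by
            linear_combination hdet + B 0 0 * h) with h1 | h1
        · apply hB1
          have h1' : B 0 0 = 1 := by linear_combination h1
          ext i j
          fin_cases i <;> fin_cases j <;>
            simp [Matrix.one_apply, hq, hr, h1', ← h, h1']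
        · apply hB2
          have h1' : B 0 0 = -1 := by linear_combination h1
          ext i j
          fin_cases i <;> fin_cases j <;>
            simp [Matrix.one_apply, hq, hr, h1', ← h, h1']
      have hsp : B 1 1 - B 0 0 ≠ 0 := sub_ne_zero.mpr (Ne.symm hps)
      set a := (k₂ - B 0 0 * k₁) / (B 1 1 - B 0 0) with ha
      refine product_key k₁ k₂ B hB a (a * (k₁ - a) - 1) 1 (k₁ - a)
        (by ring) (by ring) ?_
      rw [hq, hr, ha]
      field_simp
      ring
end

section
/- Let k₁, k₂, k₃ ∈ ℂ. For every B ∈ SL(2,ℂ) there exist A₁, A₂, A₃ ∈ SL(2,ℂ) with tr(A₁) = k₁, tr(A₂) = k₂, tr(A₃) = k₃, and A₁·A₂·A₃ = B. -/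
open Matrix

/-- Every monic quadratic over `ℂ` has a root. -/
lemma quad_root (b c : ℂ) : ∃ x : ℂ, x ^ 2 + b * x + c = 0 := by
  obtain ⟨s, hs⟩ := IsAlgClosed.exists_pow_nat_eq (b ^ 2 - 4 * c) (n := 2) (by norm_num)
  exact ⟨(-b + s) / 2, by field_simp; linear_combination hs⟩

/-- A non-scalar element of `SL(2,ℂ)` is a product of two elements of prescribed traces. -/
lemma two_factor (k₁ k₂ : ℂ) (C : Matrix (Fin 2) (Fin 2) ℂ) (hC : C.det = 1)
    (h : C 1 0 ≠ 0 ∨ C 0 0 ≠ C 1 1) :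
    ∃ X Y : Matrix (Fin 2) (Fin 2) ℂ,
      X.det = 1 ∧ Y.det = 1 ∧ X.trace = k₁ ∧ Y.trace = k₂ ∧ X * Y = C := by
  obtain ⟨p, q, r, hdet, heq⟩ :
      ∃ p q r : ℂ, p * (k₁ - p) - q * r = 1 ∧
        p * (C 1 1 - C 0 0) - q * (C 1 0) - r * (C 0 1) = k₂ - k₁ * C 0 0 := by
    by_cases h21 : C 1 0 ≠ 0
    · obtain ⟨p, hp⟩ := quad_root (-k₁) 1
      refine ⟨p, (p * (C 1 1 - C 0 0) - (k₂ - k₁ * C 0 0)) / C 1 0, 0, ?_, ?_⟩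
      · linear_combination -hp
      · field_simp
        ring
    · push_neg at h21
      by_cases h12 : C 0 1 ≠ 0
      · obtain ⟨p, hp⟩ := quad_root ((C 1 1 - C 0 0 - k₁ * C 0 1) / C 0 1)
          ((C 0 1 - (k₂ - k₁ * C 0 0)) / C 0 1)
        refine ⟨p, 1, p * (k₁ - p) - 1, by ring, ?_⟩
        field_simp at hp
        rw [h21]
        linear_combination hp
      · push_neg at h12
        have hne : C 1 1 - C 0 0 ≠ 0 := by
          rcases h with h' | h'
          · exact absurd h21 h'
          · exact sub_ne_zero.mpr (Ne.symm h')
        refine ⟨(k₂ - k₁ * C 0 0) / (C 1 1 - C 0 0),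
          ((k₂ - k₁ * C 0 0) / (C 1 1 - C 0 0)) *
            (k₁ - (k₂ - k₁ * C 0 0) / (C 1 1 - C 0 0)) - 1, 1, by ring, ?_⟩
        rw [h21, h12]
        field_simp
        ring
  set X : Matrix (Fin 2) (Fin 2) ℂ := !![p, q; r, k₁ - p] with hX
  have hXdet : X.det = 1 := by
    rw [hX, Matrix.det_fin_two_of]; linear_combination hdet
  have hXadj : X.adjugate = !![k₁ - p, -q; -r, p] := by
    rw [hX, Matrix.adjugate_fin_two_of]
  refine ⟨X, !![k₁ - p, -q; -r, p] * C, hXdet, ?_, ?_, ?_, ?_⟩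
  · rw [Matrix.det_mul, hC, Matrix.det_fin_two_of, mul_one]
    linear_combination hdet
  · rw [hX, Matrix.trace_fin_two_of]; ring
  · rw [Matrix.eta_fin_two C, Matrix.mul_fin_two, Matrix.trace_fin_two_of]
    linear_combination heq
  · rw [← hXadj, ← mul_assoc, Matrix.mul_adjugate, hXdet, one_smul, one_mul]

/-- For any `k₁, k₂, k₃ ∈ ℂ` and any `B ∈ SL(2,ℂ)`, there are
`A₁, A₂, A₃ ∈ SL(2,ℂ)` with `tr Aᵢ = kᵢ` and `A₁A₂A₃ = B`. -/
theorem product_three_with_traces (k₁ k₂ k₃ : ℂ) (B : Matrix (Fin 2) (Fin 2) ℂ)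
    (hB : B.det = 1) :
    ∃ A₁ A₂ A₃ : Matrix (Fin 2) (Fin 2) ℂ,
      A₁.det = 1 ∧ A₂.det = 1 ∧ A₃.det = 1 ∧
      A₁.trace = k₁ ∧ A₂.trace = k₂ ∧ A₃.trace = k₃ ∧ A₁ * A₂ * A₃ = B := by
  obtain ⟨b, c, hbc, hneq⟩ : ∃ b c : ℂ, b * c = -1 ∧ (B 0 1) ^ 2 ≠ b ^ 2 := by
    by_cases h : (B 0 1) ^ 2 = 1
    · exact ⟨2, -1 / 2, by norm_num, by rw [h]; norm_num⟩
    · exact ⟨1, -1, by norm_num, by simpa using h⟩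
  have hc0 : c ≠ 0 := fun h => by simp [h] at hbc
  set A₃ : Matrix (Fin 2) (Fin 2) ℂ := !![k₃, b; c, 0] with hA₃
  set N : Matrix (Fin 2) (Fin 2) ℂ := !![0, -b; -c, k₃] with hN
  have hNA : N * A₃ = 1 := by
    ext i j
    fin_cases i <;> fin_cases j <;>
      simp [hN, hA₃, Matrix.mul_apply, Fin.sum_univ_two, Matrix.one_apply] <;>
      first | ring1 | linear_combination -hbc
  set C : Matrix (Fin 2) (Fin 2) ℂ := B * N with hCdef
  have hCdet : C.det = 1 := by
    rw [hCdef, Matrix.det_mul, hB, one_mul, hN, Matrix.det_fin_two_of]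
    linear_combination -hbc
  have hC10 : C 1 0 = -c * B 1 1 := by
    rw [hCdef, hN]
    simp [Matrix.mul_apply, Fin.sum_univ_two]
    ring
  have hC00 : C 0 0 = -c * B 0 1 := by
    rw [hCdef, hN]
    simp [Matrix.mul_apply, Fin.sum_univ_two]
    ring
  have hC11 : C 1 1 = -b * B 1 0 + k₃ * B 1 1 := by
    rw [hCdef, hN]
    simp [Matrix.mul_apply, Fin.sum_univ_two]
    ring
  have hns : C 1 0 ≠ 0 ∨ C 0 0 ≠ C 1 1 := by
    by_contra hcon
    push_neg at hcon
    obtain ⟨h1, h2⟩ := hcon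
    rw [hC10] at h1
    have hB11 : B 1 1 = 0 := by
      rcases mul_eq_zero.mp h1 with h | h
      · exact absurd (neg_eq_zero.mp h) hc0
      · exact h
    rw [hC00, hC11, hB11, mul_zero, add_zero] at h2
    have hdetB : B 0 0 * B 1 1 - B 0 1 * B 1 0 = 1 := by
      rw [← Matrix.det_fin_two]; exact hB
    rw [hB11, mul_zero, zero_sub] at hdetB
    exact hneq (by
      linear_combination (B 0 1 * b) * h2 + b ^ 2 * hdetB + (B 0 1) ^ 2 * hbc)
  obtain ⟨X, Y, hXd, hYd, hXt, hYt, hXY⟩ := two_factor k₁ k₂ C hCdet hns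
  refine ⟨X, Y, A₃, hXd, hYd, ?_, hXt, hYt, ?_, ?_⟩
  · rw [hA₃, Matrix.det_fin_two_of]; linear_combination -hbc
  · rw [hA₃, Matrix.trace_fin_two_of]; ring
  · rw [hXY, hCdef, mul_assoc, hNA, mul_one]
end

section
/- Every element of SL(2,ℂ) is a commutator: for every B ∈ SL(2,ℂ) there exist A₁, A₂ ∈ SL(2,ℂ) such that A₁·A₂·A₁⁻¹·A₂⁻¹ = B. -/
open Matrix Complex

namespace Sl2Comm

abbrev Mat2 := Matrix (Fin 2) (Fin 2) ℂ

/-- Conjugation transport of the commutation relation. -/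
lemma conj_trick (R a₁ a₂ M b : Mat2) (hR : IsUnit R.det)
    (hA : a₁ * a₂ = M * a₂ * a₁) (hbR : b * R = R * M) :
    (R * a₁ * R⁻¹) * (R * a₂ * R⁻¹) = b * (R * a₂ * R⁻¹) * (R * a₁ * R⁻¹) := by
  have h1 : R⁻¹ * R = 1 := Matrix.nonsing_inv_mul R hR
  have h2 : ∀ x : Mat2, R⁻¹ * (R * x) = x := fun x => by rw [← mul_assoc, h1, one_mul]
  have h3 : ∀ x : Mat2, b * (R * x) = R * (M * x) := fun x => by
    rw [← mul_assoc, hbR, mul_assoc]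
  simp only [mul_assoc, h2, h3]
  simp only [← mul_assoc, hA]

lemma det_conj (R a : Mat2) (hR : IsUnit R.det) (ha : a.det = 1) :
    (R * a * R⁻¹).det = 1 := by
  rw [det_mul, det_mul, ha, mul_one, Matrix.det_nonsing_inv]
  exact Ring.mul_inverse_cancel _ hR

/-- Companion matrix of `X² - t X + 1`. -/
def C (t : ℂ) : Mat2 := !![0, -1; 1, t]

/-- If `b` is conjugate to the companion matrix `C (tr b)` then `b` satisfies the
commutation relation with suitable determinant-one matrices. -/
lemma step (b : Mat2) (P : Mat2) (hP : IsUnit P.det)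
    (hbP : b * P = P * C (b 0 0 + b 1 1)) :
    ∃ m₁ m₂ : Mat2, m₁.det = 1 ∧ m₂.det = 1 ∧ m₁ * m₂ = b * m₂ * m₁ := by
  set t : ℂ := b 0 0 + b 1 1 with ht
  set a₁ : Mat2 := !![I, 0; 0, -I] with ha₁
  set a₂ : Mat2 := !![(t+2)/4, (t-2)/4; 1, 1] with ha₂
  set M : Mat2 := !![t/2, (4-t^2)/8; -2, t/2] with hM
  set Q : Mat2 := !![1, t/2; 0, -2] with hQdef
  have hda₁ : a₁.det = 1 := by
    simp [ha₁, Matrix.det_fin_two_of]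
  have hda₂ : a₂.det = 1 := by
    simp [ha₂, Matrix.det_fin_two_of]; ring
  have hQ : IsUnit Q.det := by
    simp [hQdef, Matrix.det_fin_two_of]
  have hA : a₁ * a₂ = M * a₂ * a₁ := by
    ext i j
    fin_cases i <;> fin_cases j <;>
      simp [ha₁, ha₂, hM, Matrix.mul_apply, Fin.sum_univ_two] <;> ring
  have hMQ : M * Q = Q * C t := by
    ext i j
    fin_cases i <;> fin_cases j <;>
      simp [hM, hQdef, C, Matrix.mul_apply, Fin.sum_univ_two] <;> ring
  -- the conjugator
  set R : Mat2 := P * Q⁻¹ with hRdef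
  have hR : IsUnit R.det := by
    rw [hRdef, det_mul]
    exact hP.mul (Q.isUnit_nonsing_inv_det hQ)
  have hM' : M = Q * (C t * Q⁻¹) := by
    have h5 : M * Q * Q⁻¹ = Q * C t * Q⁻¹ := by rw [hMQ]
    rwa [Matrix.mul_nonsing_inv_cancel_right Q M hQ, mul_assoc] at h5
  have hbR : b * R = R * M := by
    rw [hRdef, ← mul_assoc, hbP, hM', mul_assoc P Q⁻¹,
      Matrix.nonsing_inv_mul_cancel_left Q _ hQ, mul_assoc]
  exact ⟨R * a₁ * R⁻¹, R * a₂ * R⁻¹, det_conj R a₁ hR hda₁, det_conj R a₂ hR hda₂,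
    conj_trick R a₁ a₂ M b hR hA hbR⟩

lemma key (b : Mat2) (hb : b.det = 1) :
    ∃ m₁ m₂ : Mat2, m₁.det = 1 ∧ m₂.det = 1 ∧ m₁ * m₂ = b * m₂ * m₁ := by
  have hdet : b 0 0 * b 1 1 - b 0 1 * b 1 0 = 1 := by
    rw [← Matrix.det_fin_two]; exact hb
  by_cases hr : b 1 0 = 0
  · by_cases hq : b 0 1 = 0
    · have hdet' : b 0 0 * b 1 1 = 1 := by
        linear_combination hdet + b 0 1 * hr
      by_cases hps : b 0 0 = b 1 1
      · -- scalar case : b = ±1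
        have hsq : (b 0 0 - 1) * (b 0 0 + 1) = 0 := by
          linear_combination hdet' + b 0 0 * hps
        rcases mul_eq_zero.1 hsq with h1 | h1
        · -- b = 1
          have hp : b 0 0 = 1 := by linear_combination h1
          have hs : b 1 1 = 1 := by rw [← hps]; exact hp
          refine ⟨1, 1, Matrix.det_one, Matrix.det_one, ?_⟩
          have hb1 : b = 1 := by
            ext i j
            fin_cases i <;> fin_cases j <;>
              simp [hq, hr, hp, hs, Matrix.one_apply]
          rw [hb1]; simp
        · -- b = -1
          have hp : b 0 0 = -1 := by linear_combination h1
          have hs : b 1 1 = -1 := by rw [← hps]; exact hp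
          refine ⟨!![I, 0; 0, -I], !![0, 1; -1, 0], ?_, ?_, ?_⟩
          · simp [Matrix.det_fin_two_of]
          · simp [Matrix.det_fin_two_of]
          · ext i j
            fin_cases i <;> fin_cases j <;>
              simp [Matrix.mul_apply, Fin.sum_univ_two, hq, hr, hp, hs]
      · -- diagonal non-scalar
        refine step b !![1, b 0 0; 1, b 1 1] ?_ ?_
        · simp only [Matrix.det_fin_two_of, one_mul, mul_one, isUnit_iff_ne_zero]
          intro h
          exact hps (by linear_combination -h)
        · ext i j
          fin_cases i <;> fin_cases j <;>
            simp [C, Matrix.mul_apply, Fin.sum_univ_two, hq, hr] <;>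
            (first | ring1 | linear_combination -hdet')
    · -- q ≠ 0
      refine step b !![0, b 0 1; 1, b 1 1] ?_ ?_
      · simp only [Matrix.det_fin_two_of, isUnit_iff_ne_zero]
        intro h; exact hq (by linear_combination -h)
      · ext i j
        fin_cases i <;> fin_cases j <;>
          simp [C, Matrix.mul_apply, Fin.sum_univ_two] <;>
          (first | ring1 | linear_combination -hdet)
  · -- r ≠ 0
    refine step b !![1, b 0 0; 0, b 1 0] ?_ ?_
    · simp only [Matrix.det_fin_two_of, isUnit_iff_ne_zero, one_mul, mul_zero]
      intro h; exact hr (by linear_combination h)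
    · ext i j
      fin_cases i <;> fin_cases j <;>
        simp [C, Matrix.mul_apply, Fin.sum_univ_two] <;>
        (first | ring1 | linear_combination -hdet)

end Sl2Comm

/-- Every element of `SL(2,ℂ)` is a commutator. -/
theorem sl2_commutator_surjective (B : Matrix.SpecialLinearGroup (Fin 2) ℂ) :
    ∃ A₁ A₂ : Matrix.SpecialLinearGroup (Fin 2) ℂ, A₁ * A₂ * A₁⁻¹ * A₂⁻¹ = B := by
  obtain ⟨m₁, m₂, h1, h2, hcomm⟩ := Sl2Comm.key B.1 B.2
  refine ⟨⟨m₁, h1⟩, ⟨m₂, h2⟩, ?_⟩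
  have hg : (⟨m₁, h1⟩ * ⟨m₂, h2⟩ : Matrix.SpecialLinearGroup (Fin 2) ℂ)
      = B * ⟨m₂, h2⟩ * ⟨m₁, h1⟩ := by
    apply Subtype.ext
    exact hcomm
  rw [hg]
  exact (congrArg (· * _) (mul_inv_cancel_right _ _)).trans (mul_inv_cancel_right _ _)
end

section
/- Let A and B be 2×2 complex matrices with det(A) = 0 and det(B) = 0. Then A·B·A*·B* = 0 if and only if at least one of A·B, B·A*, and A*·B* is the zero matrix. -/
open Matrix

/-- A 2×2 matrix over a field with zero determinant has rank ≤ 1: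
its entries factor as `u i * w j`. -/
lemma rank_one_decomp (Y : Matrix (Fin 2) (Fin 2) ℂ) (h : Y.det = 0) :
    ∃ u w : Fin 2 → ℂ, ∀ i j, Y i j = u i * w j := by
  rw [Matrix.det_fin_two] at h
  by_cases ha : Y 0 0 ≠ 0
  · refine ⟨![1, Y 1 0 / Y 0 0], ![Y 0 0, Y 0 1], ?_⟩
    intro i j
    fin_cases i <;> fin_cases j
    · simp
    · simp
    · simp; field_simp
    · simp; field_simp; linear_combination h
  · push_neg at ha
    by_cases hb : Y 0 1 ≠ 0
    · refine ⟨![1, Y 1 1 / Y 0 1], ![Y 0 0, Y 0 1], ?_⟩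
      intro i j
      fin_cases i <;> fin_cases j
      · simp
      · simp
      · simp; field_simp; linear_combination -h
      · simp; field_simp
    · push_neg at hb
      exact ⟨![0, 1], ![Y 1 0, Y 1 1], by
        intro i j; fin_cases i <;> fin_cases j <;> simp [ha, hb]⟩

/-- Key cancellation lemma: if `Y` is a 2×2 matrix with `det Y = 0`,
`X·Y ≠ 0` and `X·Y·Z = 0`, then `Y·Z = 0`. -/
lemma cancel_left (X Y Z : Matrix (Fin 2) (Fin 2) ℂ) (hY : Y.det = 0)
    (hXY : X * Y ≠ 0) (h : X * Y * Z = 0) : Y * Z = 0 := by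
  obtain ⟨u, w, hu⟩ := rank_one_decomp Y hY
  set s : Fin 2 → ℂ := fun i => ∑ k, X i k * u k with hs
  have hXYe : ∀ i j, (X * Y) i j = s i * w j := by
    intro i j
    simp only [Matrix.mul_apply, hu, hs, Finset.sum_mul]
    ring_nf
    exact Finset.sum_congr rfl (fun k _ => by ring)
  set t : Fin 2 → ℂ := fun j => ∑ k, w k * Z k j with ht
  -- some i₀ has s i₀ ≠ 0
  obtain ⟨i₀, j₀, hij⟩ : ∃ i j, (X * Y) i j ≠ 0 := by
    by_contra hc
    push_neg at hc
    exact hXY (by ext i j; simp [hc i j])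
  have hs₀ : s i₀ ≠ 0 := fun h0 => hij (by rw [hXYe, h0, zero_mul])
  have htz : ∀ j, t j = 0 := by
    intro j
    have := congrFun (congrFun h i₀) j
    simp only [Matrix.mul_apply, hXYe, Matrix.zero_apply] at this
    have : s i₀ * t j = 0 := by
      rw [ht]
      simp only [Finset.mul_sum]
      rw [← this]
      exact Finset.sum_congr rfl (fun k _ => by ring)
    exact (mul_eq_zero.mp this).resolve_left hs₀
  ext i j
  simp only [Matrix.mul_apply, hu, Matrix.zero_apply]
  have : u i * t j = 0 := by rw [htz, mul_zero]
  rw [ht] at this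
  rw [← this]
  simp only [Finset.mul_sum]
  exact Finset.sum_congr rfl (fun k _ => by ring)

/-- For 2×2 complex matrices `A`, `B` of determinant zero:
`A·B·A*·B* = 0` iff at least one of `A·B`, `B·A*`, `A*·B*` is zero,
where `X*` is the adjugate of `X`. -/
theorem commutator_adjugate_eq_zero_iff (A B : Matrix (Fin 2) (Fin 2) ℂ)
    (hA : A.det = 0) (hB : B.det = 0) :
    A * B * A.adjugate * B.adjugate = 0 ↔
      A * B = 0 ∨ B * A.adjugate = 0 ∨ A.adjugate * B.adjugate = 0 := by
  have hAadj : A.adjugate.det = 0 := by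
    rw [Matrix.det_adjugate, hA]; norm_num
  constructor
  · intro h
    by_cases h1 : A * B = 0
    · exact Or.inl h1
    by_cases h2 : B * A.adjugate = 0
    · exact Or.inr (Or.inl h2)
    refine Or.inr (Or.inr ?_)
    have step1 : B * (A.adjugate * B.adjugate) = 0 := by
      apply cancel_left A B _ hB h1
      rw [← mul_assoc]
      exact h
    have step2 : B * A.adjugate * B.adjugate = 0 := by
      rw [mul_assoc]; exact step1
    exact cancel_left B A.adjugate B.adjugate hAadj h2 step2
  · rintro (h | h | h)
    · rw [h, zero_mul, zero_mul]
    · rw [mul_assoc A B, h, mul_zero, zero_mul]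
    · rw [mul_assoc (A*B), h, mul_zero]
end

section
/- (i) For every 2×2 complex matrix B with det(B) = 0 and tr(B) ≠ 0, there exist 2×2 complex matrices A₁, A₂ with det(A₁) = det(A₂) = 0, tr(A₁) = tr(A₂) = 0, and A₁·A₂ = B. (ii) If A₁, A₂ are 2×2 complex matrices with det(A₁) = det(A₂) = 0, tr(A₁) = tr(A₂) = 0, and tr(A₁·A₂) = 0, then A₁·A₂ = 0. -/
open Matrix

private lemma sq0 {x : ℂ} (h : x ^ 2 = 0) : x = 0 :=
  (pow_eq_zero_iff two_ne_zero).mp h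

private lemma aux2 (a b c p q r : ℂ) (h1 : a ^ 2 + b * c = 0) (h2 : p ^ 2 + q * r = 0)
    (h3 : 2 * a * p + b * r + c * q = 0) :
    a * p + b * r = 0 ∧ a * q - b * p = 0 ∧ c * p - a * r = 0 ∧ c * q + a * p = 0 := by
  have s1 : (b * r - c * q) ^ 2 = 0 := by
    linear_combination (b * r + c * q - 2 * a * p) * h3 - 4 * q * r * h1 + 4 * a ^ 2 * h2
  have s2 : (a * q - b * p) ^ 2 = 0 := by
    linear_combination q ^ 2 * h1 + b ^ 2 * h2 - b * q * h3
  have s3 : (c * p - a * r) ^ 2 = 0 := by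
    linear_combination r ^ 2 * h1 + c ^ 2 * h2 - c * r * h3
  have e1 := sq0 s1
  have e2 := sq0 s2
  have e3 := sq0 s3
  refine ⟨?_, e2, e3, ?_⟩
  · linear_combination h3 / 2 + e1 / 2
  · linear_combination h3 / 2 - e1 / 2

/-- (i) Every 2×2 complex matrix `B` with `det B = 0` and `tr B ≠ 0` is a product of two
matrices of determinant zero and trace zero.  (ii) If `A₁, A₂` have determinant zero and
trace zero and `tr (A₁A₂) = 0`, then `A₁A₂ = 0`. -/
theorem product_of_traceless_det_zero :
    (∀ B : Matrix (Fin 2) (Fin 2) ℂ, B.det = 0 → B.trace ≠ 0 →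
      ∃ A₁ A₂ : Matrix (Fin 2) (Fin 2) ℂ,
        A₁.det = 0 ∧ A₂.det = 0 ∧ A₁.trace = 0 ∧ A₂.trace = 0 ∧ A₁ * A₂ = B) ∧
    (∀ A₁ A₂ : Matrix (Fin 2) (Fin 2) ℂ, A₁.det = 0 → A₂.det = 0 →
      A₁.trace = 0 → A₂.trace = 0 → (A₁ * A₂).trace = 0 → A₁ * A₂ = 0) := by
  constructor
  · intro B hdet htr
    rw [Matrix.det_fin_two] at hdet
    rw [Matrix.trace_fin_two] at htr
    set a := B 0 0 with ha
    set b := B 0 1 with hb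
    set c := B 1 0 with hc
    set d := B 1 1 with hd
    have hB : B = !![a, b; c, d] := by rw [Matrix.eta_fin_two B]
    have ht : a + d ≠ 0 := htr
    by_cases hA : a = 0
    · have hd0 : d ≠ 0 := by intro h; exact ht (by rw [hA, h]; ring)
      have hbc : b * c = 0 := by linear_combination -hdet + d * hA
      rcases mul_eq_zero.mp hbc with hb0 | hc0
      · -- b = 0
        refine ⟨!![0, 0; 1, 0], !![c, d; -(c ^ 2 / d), -c], ?_, ?_, ?_, ?_, ?_⟩
        · rw [Matrix.det_fin_two_of]; ring
        · rw [Matrix.det_fin_two_of]; field_simp; ring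
        · simp [Matrix.trace_fin_two_of]
        · simp [Matrix.trace_fin_two_of]
        · rw [hB]
          ext i j
          fin_cases i <;> fin_cases j <;>
            simp [Matrix.mul_apply, Fin.sum_univ_two]
          · exact hA.symm
          · exact hb0.symm
      · -- c = 0
        refine ⟨!![b, -(b ^ 2 / d); d, -b], !![0, 1; 0, 0], ?_, ?_, ?_, ?_, ?_⟩
        · rw [Matrix.det_fin_two_of]; field_simp; ring
        · rw [Matrix.det_fin_two_of]; ring
        · simp [Matrix.trace_fin_two_of]
        · simp [Matrix.trace_fin_two_of]
        · rw [hB]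
          ext i j
          fin_cases i <;> fin_cases j <;>
            simp [Matrix.mul_apply, Fin.sum_univ_two]
          · exact hA.symm
          · exact hc0.symm
    · -- a ≠ 0
      refine ⟨!![c / (a * (a + d)), -(1 / (a + d));
                 c ^ 2 / (a ^ 2 * (a + d)), -(c / (a * (a + d)))],
              !![a * b, b ^ 2; -(a ^ 2), -(a * b)], ?_, ?_, ?_, ?_, ?_⟩
      · rw [Matrix.det_fin_two_of]; field_simp; ring
      · rw [Matrix.det_fin_two_of]; ring
      · simp [Matrix.trace_fin_two_of]
      · simp [Matrix.trace_fin_two_of]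
      · rw [hB]
        ext i j
        fin_cases i <;> fin_cases j <;>
          simp only [Matrix.mul_apply, Fin.sum_univ_two, Fin.mk_zero, Fin.mk_one, Fin.isValue,
            Matrix.cons_val', Matrix.cons_val_zero, Matrix.cons_val_one, Matrix.head_cons,
            Matrix.head_fin_const, Matrix.empty_val', Matrix.cons_val_fin_one, Matrix.of_apply]
        · field_simp
          linear_combination (-1 : ℂ) * hdet
        · field_simp
          linear_combination (-b) * hdet
        · field_simp
          linear_combination (-c) * hdet
        · field_simp
          linear_combination (-(b * c + a * d + a ^ 2)) * hdet
  · intro A₁ A₂ hd1 hd2 ht1 ht2 htp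
    rw [Matrix.det_fin_two] at hd1 hd2
    rw [Matrix.trace_fin_two] at ht1 ht2
    rw [Matrix.trace_fin_two] at htp
    simp only [Matrix.mul_apply, Fin.sum_univ_two] at htp
    have e1 : A₁ 1 1 = -A₁ 0 0 := by linear_combination ht1
    have e2 : A₂ 1 1 = -A₂ 0 0 := by linear_combination ht2
    obtain ⟨k1, k2, k3, k4⟩ := aux2 (A₁ 0 0) (A₁ 0 1) (A₁ 1 0) (A₂ 0 0) (A₂ 0 1) (A₂ 1 0)
      (by linear_combination A₁ 0 0 * e1 - hd1)
      (by linear_combination A₂ 0 0 * e2 - hd2)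
      (by linear_combination htp + A₁ 0 0 * e2 - A₂ 1 1 * e1)
    ext i j
    fin_cases i <;> fin_cases j <;>
      simp only [Matrix.mul_apply, Fin.sum_univ_two, Matrix.zero_apply, Fin.mk_zero, Fin.mk_one,
        Fin.isValue]
    · linear_combination k1
    · linear_combination k2 + A₁ 0 1 * e2
    · linear_combination k3 + A₂ 1 0 * e1
    · linear_combination k4 + A₂ 1 1 * e1 - A₁ 0 0 * e2
end

section
/- Let A be a nonscalar 2×2 complex matrix (i.e., A is not a scalar multiple of the identity). Then the set { V : V is a 2×2 complex matrix with tr(V) = 0 and tr(V·A*) = 0 } is equal to the set { U·A − A·U : U is a 2×2 complex matrix with tr(U) = 0 }. -/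
open Matrix

set_option maxHeartbeats 2000000 in
/-- For a nonscalar 2×2 complex matrix `A`, the set of traceless matrices `V` with
`tr (V·A*) = 0` equals the set of brackets `U·A − A·U` with `U` traceless. -/
theorem tangent_space_eq_brackets (A : Matrix (Fin 2) (Fin 2) ℂ)
    (hA : ∀ c : ℂ, A ≠ c • (1 : Matrix (Fin 2) (Fin 2) ℂ)) :
    {V : Matrix (Fin 2) (Fin 2) ℂ | V.trace = 0 ∧ (V * A.adjugate).trace = 0} =
      {W : Matrix (Fin 2) (Fin 2) ℂ |
        ∃ U : Matrix (Fin 2) (Fin 2) ℂ, U.trace = 0 ∧ W = U * A - A * U} := by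
  have hns : ¬ (A 0 1 = 0 ∧ A 1 0 = 0 ∧ A 0 0 = A 1 1) := by
    rintro ⟨hb, hc, had⟩
    apply hA (A 0 0)
    ext i j
    fin_cases i <;> fin_cases j <;>
      simp [Matrix.one_apply, hb, hc, had]
  ext V
  simp only [Set.mem_setOf_eq]
  constructor
  · rintro ⟨htr, htr2⟩
    set a := A 0 0 with ha
    set b := A 0 1 with hb
    set c := A 1 0 with hc
    set d := A 1 1 with hd
    have hV11 : V 1 1 = -V 0 0 := by
      have := htr
      rw [Matrix.trace_fin_two] at this
      linear_combination this
    set v := V 0 0 with hv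
    set w := V 0 1 with hw
    set x := V 1 0 with hx
    have hcon : v * (a - d) + w * c + x * b = 0 := by
      have h2 := htr2
      rw [Matrix.adjugate_fin_two, Matrix.trace_fin_two] at h2
      simp only [Matrix.mul_apply, Fin.sum_univ_two, Matrix.of_apply,
        Matrix.cons_val', Matrix.cons_val_zero, Matrix.cons_val_one,
        Matrix.head_cons, Matrix.empty_val', Matrix.cons_val_fin_one,
        Matrix.head_fin_const] at h2
      rw [hV11] at h2
      linear_combination -h2
    have hVeq : V = !![v, w; x, -v] := by
      ext i j
      fin_cases i <;> fin_cases j <;> simp [hV11, hv, hw, hx]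
    have hAeq : A = !![a, b; c, d] := by
      ext i j
      fin_cases i <;> fin_cases j <;> simp [ha, hb, hc, hd]
    by_cases hbz : b = 0
    · by_cases hcz : c = 0
      · have had : a ≠ d := fun h => hns ⟨hbz, hcz, h⟩
        have hv0 : v = 0 := by
          have hmul : v * (a - d) = 0 := by
            rw [hbz, hcz] at hcon; linear_combination hcon
          rcases mul_eq_zero.mp hmul with h | h
          · exact h
          · exact absurd (sub_eq_zero.mp h) had
        refine ⟨!![0, w / (d - a); x / (a - d), 0], by simp [Matrix.trace_fin_two], ?_⟩
        have had' : a - d ≠ 0 := sub_ne_zero.mpr had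
        have hda : d - a ≠ 0 := fun h => had' (by linear_combination -h)
        rw [hVeq, hAeq, Matrix.mul_fin_two, Matrix.mul_fin_two]
        ext i j
        fin_cases i <;> fin_cases j <;>
          simp [hbz, hcz, hv0] <;>
          field_simp <;>
          first
            | ring1
            | linear_combination hcon
            | linear_combination -hcon
            | linear_combination (2 : ℂ) * hcon
            | linear_combination (-2 : ℂ) * hcon
      · refine ⟨!![-x / (2 * c), v / c; 0, -(-x / (2 * c))],
          by simp [Matrix.trace_fin_two], ?_⟩
        rw [hVeq, hAeq, Matrix.mul_fin_two, Matrix.mul_fin_two]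
        ext i j
        fin_cases i <;> fin_cases j <;>
          simp <;>
          field_simp <;>
          first
            | ring1
            | linear_combination hcon
            | linear_combination -hcon
            | linear_combination (2 : ℂ) * hcon
            | linear_combination (-2 : ℂ) * hcon
            | linear_combination c * hcon
            | linear_combination -c * hcon
            | linear_combination (2 : ℂ) * c * hcon
            | linear_combination (-2 : ℂ) * c * hcon
            | linear_combination ((2 : ℂ) * c + 8 * c ^ 3) * hcon
            | linear_combination (-(2 : ℂ) * c - 8 * c ^ 3) * hcon
            | linear_combination ((4 : ℂ) * c ^ 3) * hcon
            | linear_combination (-(4 : ℂ) * c ^ 3) * hcon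
    · refine ⟨!![w / (2 * b), 0; -v / b, -(w / (2 * b))],
        by simp [Matrix.trace_fin_two], ?_⟩
      rw [hVeq, hAeq, Matrix.mul_fin_two, Matrix.mul_fin_two]
      ext i j
      fin_cases i <;> fin_cases j <;>
        simp <;>
        field_simp <;>
        first
          | ring1
          | linear_combination hcon
          | linear_combination -hcon
          | linear_combination (2 : ℂ) * hcon
          | linear_combination (-2 : ℂ) * hcon
          | linear_combination b * hcon
          | linear_combination -b * hcon
          | linear_combination (2 : ℂ) * b * hcon
          | linear_combination (-2 : ℂ) * b * hcon
          | linear_combination ((2 : ℂ) * b + 8 * b ^ 3) * hcon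
          | linear_combination (-(2 : ℂ) * b - 8 * b ^ 3) * hcon
          | linear_combination ((4 : ℂ) * b ^ 3) * hcon
          | linear_combination (-(4 : ℂ) * b ^ 3) * hcon
  · rintro ⟨U, hU, rfl⟩
    constructor
    · rw [Matrix.trace_sub, Matrix.trace_mul_comm, sub_self]
    · have key : (U * A - A * U) * A.adjugate = A.det • U - A * U * A.adjugate := by
        rw [sub_mul, mul_assoc, Matrix.mul_adjugate]
        ext i j
        simp [Matrix.mul_apply, Matrix.smul_apply, mul_comm]
      rw [key, Matrix.trace_sub, Matrix.trace_smul, hU, smul_zero,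
        Matrix.trace_mul_comm, ← mul_assoc, Matrix.adjugate_mul, zero_sub]
      simp [Matrix.trace_smul, hU]
end

section
/- Let m ≥ 1 be an integer and let R = ℂ[(X₁)₁₁, (X₁)₁₂, (X₁)₂₁, (X₁)₂₂, …, (X_m)₁₁, (X_m)₁₂, (X_m)₂₁, (X_m)₂₂, T] be the polynomial ring over ℂ in 4m + 1 variables. For i = 1, …, m let E_i = (X_i)₁₁·(X_i)₂₂ − (X_i)₁₂·(X_i)₂₁ − T². Then E₁, …, E_m is a regular sequence in R. -/
open MvPolynomial

/-- The polynomial ring `R = ℂ[(Xᵢ)ⱼₖ, T]` in `4m + 1` variables, where the variable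
`Sum.inl (i, j, k)` is the `(j,k)` entry of the `i`-th generic 2×2 matrix `Xᵢ` and
`Sum.inr ()` is `T`. -/
noncomputable abbrev genericMatrixRing (m : ℕ) :=
  MvPolynomial ((Fin m × Fin 2 × Fin 2) ⊕ Unit) ℂ

/-- `Eᵢ = det Xᵢ − T² = (Xᵢ)₁₁(Xᵢ)₂₂ − (Xᵢ)₁₂(Xᵢ)₂₁ − T²`. -/
noncomputable def detMinusTsq (m : ℕ) (i : Fin m) : genericMatrixRing m :=
  X (Sum.inl (i, 0, 0)) * X (Sum.inl (i, 1, 1))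
    - X (Sum.inl (i, 0, 1)) * X (Sum.inl (i, 1, 0)) - X (Sum.inr ()) ^ 2


theorem aux_div {A : Type*} [CommRing A] (u b : A) (f : Polynomial A) :
    ∃ (N : ℕ) (q : Polynomial A) (r : A),
      Polynomial.C u ^ N * f = q * (Polynomial.C u * Polynomial.X - Polynomial.C b) + Polynomial.C r := by
  induction f using Polynomial.induction_on with
  | C a => exact ⟨0, 0, a, by ring⟩
  | add p q hp hq =>
    obtain ⟨N₁, q₁, r₁, h₁⟩ := hp
    obtain ⟨N₂, q₂, r₂, h₂⟩ := hq
    refine ⟨N₁ + N₂, Polynomial.C u ^ N₂ * q₁ + Polynomial.C u ^ N₁ * q₂, u ^ N₂ * r₁ + u ^ N₁ * r₂, ?_⟩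
    simp only [map_add, map_mul, map_pow]
    linear_combination (Polynomial.C u : Polynomial A) ^ N₂ * h₁ + (Polynomial.C u : Polynomial A) ^ N₁ * h₂
  | monomial n a ih =>
    obtain ⟨N, q, r, h⟩ := ih
    refine ⟨N + 1, (Polynomial.C u * Polynomial.X) * q + Polynomial.C r, r * b, ?_⟩
    simp only [map_mul]
    linear_combination (Polynomial.C u * Polynomial.X : Polynomial A) * h

theorem aux_prime_lin {A : Type*} [CommRing A] [IsDomain A] {u b : A}
    (hu : Prime u) (hub : ¬ u ∣ b) :
    Prime (Polynomial.C u * Polynomial.X - Polynomial.C b) := by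
  have hp0 : (Polynomial.C u * Polynomial.X - Polynomial.C b : Polynomial A) ≠ 0 := by
    intro h
    have h1 : (Polynomial.C u * Polynomial.X - Polynomial.C b : Polynomial A).coeff 1 = 0 := by rw [h]; simp
    simp [Polynomial.coeff_C] at h1
    exact hu.ne_zero h1
  rw [← Ideal.span_singleton_prime hp0]
  set K := FractionRing A
  set φ := algebraMap A K with hφ
  set θ : Polynomial A →+* K := Polynomial.eval₂RingHom φ (φ b / φ u) with hθ
  have hφinj : Function.Injective φ := IsFractionRing.injective A K
  have hφu : φ u ≠ 0 := fun h => hu.ne_zero (hφinj (by simpa using h))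
  have hθp : θ (Polynomial.C u * Polynomial.X - Polynomial.C b) = 0 := by
    simp [hθ]
    rw [mul_div_cancel₀ (φ b) hφu, sub_self]
  have hker : Ideal.span {(Polynomial.C u * Polynomial.X - Polynomial.C b : Polynomial A)} = RingHom.ker θ := by
    apply le_antisymm
    · rw [Ideal.span_le]
      simpa [RingHom.mem_ker, Set.singleton_subset_iff] using hθp
    · intro f hf
      rw [RingHom.mem_ker] at hf
      obtain ⟨N, q, r, hNqr⟩ := aux_div u b f
      have : θ (Polynomial.C u ^ N * f) = θ q * θ (Polynomial.C u * Polynomial.X - Polynomial.C b) + φ r := by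
        rw [hNqr]; simp [hθ]
      rw [map_mul, hf, mul_zero, hθp, mul_zero, zero_add] at this
      have hr : r = 0 := hφinj (by simpa using this.symm)
      rw [hr, map_zero, add_zero] at hNqr
      -- Polynomial.C u ^ N * f = q * p
      have hCu : Prime (Polynomial.C u : Polynomial A) := Polynomial.prime_C_iff.mpr hu
      have hndvd : ¬ (Polynomial.C u : Polynomial A) ∣ (Polynomial.C u * Polynomial.X - Polynomial.C b) := by
        rintro ⟨g, hg⟩
        apply hub
        have h2 : (Polynomial.C b : Polynomial A) = Polynomial.C u * (Polynomial.X - g) := by linear_combination -hg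
        have h3 := congrArg (fun p => Polynomial.coeff p 0) h2
        simp [Polynomial.coeff_C, mul_comm] at h3
        exact ⟨-(g.coeff 0), by linear_combination h3⟩
      have hdvd : (Polynomial.C u : Polynomial A) ^ N ∣ q * (Polynomial.C u * Polynomial.X - Polynomial.C b) := ⟨f, hNqr.symm⟩
      obtain ⟨q', hq'⟩ := hCu.pow_dvd_of_dvd_mul_right N hndvd hdvd
      rw [hq', mul_assoc] at hNqr
      have := mul_left_cancel₀ (pow_ne_zero N (Polynomial.C_ne_zero.mpr hu.ne_zero)) hNqr
      rw [Ideal.mem_span_singleton, this]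
      exact Dvd.intro_left q' rfl
  rw [hker]
  exact RingHom.ker_isPrime θ

theorem aux_prime_quadric {D : Type*} [CommRing D] [IsDomain D] (c : D) :
    Prime (X 0 * X 1 - X 2 * X 3 - C c : MvPolynomial (Fin 4) D) := by
  have hmc : ∀ (p : MvPolynomial (Fin 4) D),
      (finSuccEquiv D 3).toRingEquiv.toMulEquiv p = finSuccEquiv D 3 p := fun _ => rfl
  rw [← MulEquiv.prime_iff (finSuccEquiv D 3).toRingEquiv.toMulEquiv, hmc]
  have himg : (finSuccEquiv D 3) (X 0 * X 1 - X 2 * X 3 - C c : MvPolynomial (Fin 4) D)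
      = Polynomial.C (X 0) * Polynomial.X - Polynomial.C (X 1 * X 2 + C c) := by
    have e1 : (1 : Fin 4) = (0 : Fin 3).succ := rfl
    have e2 : (2 : Fin 4) = (1 : Fin 3).succ := rfl
    have e3 : (3 : Fin 4) = (2 : Fin 3).succ := rfl
    rw [map_sub, map_sub, map_mul, map_mul, e1, e2, e3,
      finSuccEquiv_X_zero, finSuccEquiv_X_succ, finSuccEquiv_X_succ, finSuccEquiv_X_succ]
    have hCc : (finSuccEquiv D 3) (C c) = Polynomial.C (C c) := by
      rw [finSuccEquiv_apply]
      simp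
    rw [hCc, map_add, map_mul]
    ring
  rw [himg]
  have hXprime : Prime (X 0 : MvPolynomial (Fin 3) D) := by
    have hmc2 : ∀ (p : MvPolynomial (Fin 3) D),
        (finSuccEquiv D 2).toRingEquiv.toMulEquiv p = finSuccEquiv D 2 p := fun _ => rfl
    rw [← MulEquiv.prime_iff (finSuccEquiv D 2).toRingEquiv.toMulEquiv, hmc2, finSuccEquiv_X_zero]
    exact Polynomial.prime_X
  have hndvd : ¬ (X 0 : MvPolynomial (Fin 3) D) ∣ (X 1 * X 2 + C c) := by
    rintro ⟨g, hg⟩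
    have := congrArg (finSuccEquiv D 2) hg
    have e1 : (1 : Fin 3) = (0 : Fin 2).succ := rfl
    have e2 : (2 : Fin 3) = (1 : Fin 2).succ := rfl
    rw [map_add, map_mul, map_mul, e1, e2, finSuccEquiv_X_succ, finSuccEquiv_X_succ,
      finSuccEquiv_X_zero] at this
    have hC : (finSuccEquiv D 2) (C c) = Polynomial.C (C c) := by
      rw [finSuccEquiv_apply]; simp
    rw [hC] at this
    have h0 := congrArg (fun p => Polynomial.coeff p 0) this
    simp [Polynomial.mul_coeff_zero] at h0
    -- h0 : X 0 * X 1 + C c = 0  in MvPolynomial (Fin 2) D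
    have hco := congrArg (MvPolynomial.coeff (Finsupp.single 0 1 + Finsupp.single 1 1)) h0
    have hXX : (X 0 * X 1 : MvPolynomial (Fin 2) D)
        = monomial (Finsupp.single 0 1 + Finsupp.single 1 1) 1 := by
      rw [X, X, monomial_mul, one_mul]
    rw [coeff_add, hXX, coeff_monomial, if_pos rfl, coeff_C, if_neg, coeff_zero] at hco
    · rw [add_zero] at hco
      exact one_ne_zero hco
    · intro h
      have := DFunLike.congr_fun h 0
      simp at this
  exact aux_prime_lin hXprime hndvd

lemma comap_C_map {B : Type*} [CommRing B] {ς : Type*} (J : Ideal B) :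
    Ideal.comap (C : B →+* MvPolynomial ς B) (J.map C) = J := by
  ext b
  rw [Ideal.mem_comap, MvPolynomial.mem_map_C_iff]
  constructor
  · intro h
    simpa using h 0
  · intro hb n
    classical
    rw [coeff_C]
    split <;> simp [hb]

lemma quadric_ne_zero {D : Type*} [CommRing D] [Nontrivial D] (c : D) :
    (X 0 * X 1 - X 2 * X 3 - C c : MvPolynomial (Fin 4) D) ≠ 0 := by
  intro h
  have hco := congrArg (MvPolynomial.coeff (Finsupp.single 0 1 + Finsupp.single 1 1)) h
  have hXX : (X 0 * X 1 : MvPolynomial (Fin 4) D)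
      = monomial (Finsupp.single 0 1 + Finsupp.single 1 1) 1 := by
    rw [X, X, monomial_mul, one_mul]
  have hXX' : (X 2 * X 3 : MvPolynomial (Fin 4) D)
      = monomial (Finsupp.single 2 1 + Finsupp.single 3 1) 1 := by
    rw [X, X, monomial_mul, one_mul]
  rw [coeff_sub, coeff_sub, hXX, hXX', coeff_monomial, if_pos rfl, coeff_monomial, if_neg,
    coeff_C, if_neg, coeff_zero] at hco
  · rw [sub_zero, sub_zero] at hco
    exact one_ne_zero hco
  · intro hh
    have := DFunLike.congr_fun hh 0
    simp at this
  · intro hh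
    have := DFunLike.congr_fun hh 0
    simp [Finsupp.single_apply] at this


def grpIdx (m : ℕ) (k : Fin m) : Type := ({ i : Fin m // i ≠ k } × Fin 2 × Fin 2) ⊕ Unit

def f4 : Fin 2 × Fin 2 ≃ Fin 4 where
  toFun p := if p.1 = 0 then (if p.2 = 0 then 0 else 2) else (if p.2 = 0 then 3 else 1)
  invFun n := if n = 0 then (0, 0) else if n = 1 then (1, 1) else if n = 2 then (0, 1) else (1, 0)
  left_inv := by decide
  right_inv := by decide

def splitVar (m : ℕ) (k : Fin m) :
    ((Fin m × Fin 2 × Fin 2) ⊕ Unit) ≃ (Fin 4 ⊕ grpIdx m k) where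
  toFun s := match s with
    | .inl (i, p) => if h : i = k then .inl (f4 p) else .inr (.inl (⟨i, h⟩, p))
    | .inr _ => .inr (.inr ())
  invFun s := match s with
    | .inl n => .inl (k, f4.symm n)
    | .inr (.inl (i, p)) => .inl (i.1, p)
    | .inr (.inr _) => .inr ()
  left_inv := by
    rintro (⟨i, p⟩ | ⟨⟩)
    · dsimp only
      split_ifs with h
      · subst h; simp
      · rfl
    · rfl
  right_inv := by
    rintro (n | (⟨i, p⟩ | ⟨⟩))
    · dsimp only
      rw [dif_pos rfl]
      simp
    · dsimp only
      rw [dif_neg i.2]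
    · rfl

noncomputable def esplit (m : ℕ) (k : Fin m) :
    genericMatrixRing m ≃ₐ[ℂ] MvPolynomial (Fin 4) (MvPolynomial (grpIdx m k) ℂ) :=
  (renameEquiv ℂ (splitVar m k)).trans (sumAlgEquiv ℂ (Fin 4) (grpIdx m k))

noncomputable def EB (m : ℕ) (k : Fin m) (i : { i : Fin m // i ≠ k }) :
    MvPolynomial (grpIdx m k) ℂ :=
  X (.inl (i, 0, 0)) * X (.inl (i, 1, 1))
    - X (.inl (i, 0, 1)) * X (.inl (i, 1, 0)) - X (.inr ()) ^ 2

lemma esplit_X_ne (m : ℕ) (k : Fin m) (i : Fin m) (h : i ≠ k) (p : Fin 2 × Fin 2) :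
    esplit m k (X (.inl (i, p))) = C (X (.inl (⟨i, h⟩, p))) := by
  simp only [esplit, AlgEquiv.trans_apply, renameEquiv_apply, rename_X]
  rw [show (splitVar m k) (.inl (i, p)) = .inr (.inl (⟨i, h⟩, p)) from by
    simp [splitVar, dif_neg h]]
  exact sumAlgEquiv_X_inr _ _ _ _

lemma esplit_X_T (m : ℕ) (k : Fin m) :
    esplit m k (X (.inr ())) = C (X (.inr ())) := by
  simp only [esplit, AlgEquiv.trans_apply, renameEquiv_apply, rename_X]
  exact sumAlgEquiv_X_inr _ _ _ _

lemma esplit_X_k (m : ℕ) (k : Fin m) (p : Fin 2 × Fin 2) :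
    esplit m k (X (.inl (k, p))) = X (f4 p) := by
  simp only [esplit, AlgEquiv.trans_apply, renameEquiv_apply, rename_X]
  rw [show (splitVar m k) (.inl (k, p)) = .inl (f4 p) from by simp [splitVar]]
  exact sumAlgEquiv_X_inl _ _ _ _

lemma esplit_E_ne (m : ℕ) (k : Fin m) (i : Fin m) (h : i ≠ k) :
    esplit m k (detMinusTsq m i) = C (EB m k ⟨i, h⟩) := by
  rw [detMinusTsq, EB, map_sub, map_sub, map_mul, map_mul, map_pow,
    esplit_X_ne m k i h, esplit_X_ne m k i h, esplit_X_ne m k i h, esplit_X_ne m k i h,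
    esplit_X_T, map_sub, map_sub, map_mul, map_mul, map_pow]

lemma esplit_E_k (m : ℕ) (k : Fin m) :
    esplit m k (detMinusTsq m k)
      = X 0 * X 1 - X 2 * X 3 - C ((X (.inr ()) : MvPolynomial (grpIdx m k) ℂ) ^ 2) := by
  rw [detMinusTsq, map_sub, map_sub, map_mul, map_mul, map_pow,
    esplit_X_k, esplit_X_k, esplit_X_k, esplit_X_k, esplit_X_T, ← C_pow]
  norm_num [f4]

theorem step_lemma (m : ℕ) (k : Fin m) (S : Set (Fin m)) (hk : k ∉ S)
    (hS : (Ideal.span (detMinusTsq m '' S)).IsPrime) :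
    (Ideal.span (detMinusTsq m '' insert k S)).IsPrime ∧
      detMinusTsq m k ∉ Ideal.span (detMinusTsq m '' S) := by
  classical
  set B := MvPolynomial (grpIdx m k) ℂ with hB
  set eh : genericMatrixRing m →+* MvPolynomial (Fin 4) B :=
    ((esplit m k).toRingEquiv : genericMatrixRing m →+* MvPolynomial (Fin 4) B) with heh
  have he : ∀ x, eh x = esplit m k x := fun _ => rfl
  have ehbij : Function.Bijective eh := (esplit m k).toRingEquiv.bijective
  set I : Ideal (genericMatrixRing m) := Ideal.span (detMinusTsq m '' S) with hI
  set J : Ideal B := Ideal.span (EB m k '' { i | i.1 ∈ S }) with hJ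
  have key1 : Ideal.map eh I = Ideal.map (C : B →+* MvPolynomial (Fin 4) B) J := by
    rw [hI, hJ, Ideal.map_span, Ideal.map_span]
    congr 1
    ext p
    constructor
    · rintro ⟨_, ⟨i, hi, rfl⟩, rfl⟩
      refine ⟨EB m k ⟨i, fun hh => hk (hh ▸ hi)⟩, ⟨⟨i, _⟩, hi, rfl⟩, ?_⟩
      rw [he, esplit_E_ne m k i (fun hh => hk (hh ▸ hi))]
    · rintro ⟨_, ⟨i, hi, rfl⟩, rfl⟩
      refine ⟨detMinusTsq m i.1, ⟨i.1, hi, rfl⟩, ?_⟩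
      rw [he, esplit_E_ne m k i.1 i.2]
  haveI hIp : I.IsPrime := hS
  -- the inverse ring hom
  set es : MvPolynomial (Fin 4) B →+* genericMatrixRing m :=
    ((esplit m k).symm.toRingEquiv : MvPolynomial (Fin 4) B →+* genericMatrixRing m) with hes
  have hcomap_es : ∀ (K : Ideal (genericMatrixRing m)), Ideal.comap es K = Ideal.map eh K := by
    intro K
    have h1 : Ideal.comap es K = Ideal.comap (esplit m k).toRingEquiv.symm K := rfl
    rw [h1, Ideal.comap_symm]
    rfl
  have hJ_ker : J = RingHom.ker ((Ideal.Quotient.mk I).comp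
      (es.comp (C : B →+* MvPolynomial (Fin 4) B))) := by
    rw [← RingHom.comap_ker, Ideal.mk_ker, ← Ideal.comap_comap, hcomap_es, key1, comap_C_map]
  haveI hJp : J.IsPrime := by
    rw [hJ_ker]; exact RingHom.ker_isPrime _
  set Ψ : genericMatrixRing m →+* MvPolynomial (Fin 4) (B ⧸ J) :=
    (MvPolynomial.map (Ideal.Quotient.mk J)).comp eh with hΨ
  have hcomap_eh : ∀ (K : Ideal (genericMatrixRing m)), Ideal.comap eh (Ideal.map eh K) = K :=
    fun K => Ideal.comap_map_of_bijective eh ehbij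
  have hkerΨ : RingHom.ker Ψ = I := by
    rw [hΨ, ← RingHom.comap_ker, MvPolynomial.ker_map, Ideal.mk_ker, ← key1, hcomap_eh]
  set tb : B ⧸ J := Ideal.Quotient.mk J (X (.inr ())) with htb
  set P : MvPolynomial (Fin 4) (B ⧸ J) := X 0 * X 1 - X 2 * X 3 - C (tb ^ 2) with hP
  have hΨEk : Ψ (detMinusTsq m k) = P := by
    have : Ψ (detMinusTsq m k) = MvPolynomial.map (Ideal.Quotient.mk J) (esplit m k (detMinusTsq m k)) := rfl
    rw [this, esplit_E_k, map_sub, map_sub, map_mul, map_mul,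
      MvPolynomial.map_X, MvPolynomial.map_X, MvPolynomial.map_X, MvPolynomial.map_X,
      MvPolynomial.map_C, map_pow, hP, htb]
  have hPne : P ≠ 0 := quadric_ne_zero _
  have hEknotI : detMinusTsq m k ∉ I := by
    rw [← hkerΨ, RingHom.mem_ker, hΨEk]
    exact hPne
  have hPprime : Prime P := aux_prime_quadric _
  haveI hsP : (Ideal.span {P}).IsPrime := (Ideal.span_singleton_prime hPne).mpr hPprime
  have hker2 : Ideal.span (detMinusTsq m '' insert k S)
      = RingHom.ker ((Ideal.Quotient.mk (Ideal.span {P})).comp Ψ) := by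
    rw [← RingHom.comap_ker, Ideal.mk_ker, Set.image_insert_eq, Ideal.span_insert]
    have h1 : Ideal.span {P} = Ideal.map (MvPolynomial.map (Ideal.Quotient.mk J))
        (Ideal.span {eh (detMinusTsq m k)}) := by
      rw [Ideal.map_span, Set.image_singleton, ← hΨEk]
      rfl
    have h2 : Ideal.comap (MvPolynomial.map (Ideal.Quotient.mk J)) (Ideal.span {P})
        = Ideal.span {eh (detMinusTsq m k)} ⊔ Ideal.map (C : B →+* MvPolynomial (Fin 4) B) J := by
      rw [h1, Ideal.comap_map_of_surjective (MvPolynomial.map (Ideal.Quotient.mk J))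
        (MvPolynomial.map_surjective _ Ideal.Quotient.mk_surjective),
        ← RingHom.ker_eq_comap_bot, MvPolynomial.ker_map, Ideal.mk_ker]
    rw [hΨ, ← Ideal.comap_comap, h2, ← key1,
      show Ideal.span {eh (detMinusTsq m k)}
          = Ideal.map eh (Ideal.span {detMinusTsq m k}) from by
        rw [Ideal.map_span, Set.image_singleton],
      ← Ideal.map_sup, hcomap_eh]
  refine ⟨?_, hEknotI⟩
  rw [hker2]
  exact RingHom.ker_isPrime _

lemma insert_lt_succ (m k : ℕ) (hk : k < m) :
    insert (⟨k, hk⟩ : Fin m) {j : Fin m | (j : ℕ) < k} = {j : Fin m | (j : ℕ) < k + 1} := by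
  ext j
  simp only [Set.mem_insert_iff, Set.mem_setOf_eq, Fin.ext_iff]
  omega

lemma prime_prefix (m : ℕ) : ∀ k : ℕ, k ≤ m →
    (Ideal.span (detMinusTsq m '' {j : Fin m | (j : ℕ) < k})).IsPrime := by
  intro k
  induction k with
  | zero =>
    intro _
    have h0 : {j : Fin m | (j : ℕ) < 0} = ∅ := by ext j; simp
    rw [h0, Set.image_empty, Ideal.span_empty]
    exact Ideal.bot_prime
  | succ k ih =>
    intro hk1
    have hk : k < m := hk1
    have hSk := ih (le_of_lt hk)
    have hnotin : (⟨k, hk⟩ : Fin m) ∉ {j : Fin m | (j : ℕ) < k} := by simp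
    have := (step_lemma m ⟨k, hk⟩ _ hnotin hSk).1
    rwa [insert_lt_succ m k hk] at this

lemma notmem_prefix (m : ℕ) (k : ℕ) (hk : k < m) :
    detMinusTsq m ⟨k, hk⟩ ∉ Ideal.span (detMinusTsq m '' {j : Fin m | (j : ℕ) < k}) := by
  have hnotin : (⟨k, hk⟩ : Fin m) ∉ {j : Fin m | (j : ℕ) < k} := by simp
  exact (step_lemma m ⟨k, hk⟩ _ hnotin (prime_prefix m k (le_of_lt hk))).2

lemma aux_smulreg {R : Type*} [CommRing R] {I : Ideal R} (hI : I.IsPrime) {r : R} (hr : r ∉ I) :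
    IsSMulRegular (R ⧸ (I • ⊤ : Submodule R R)) r := by
  have htop : (I • ⊤ : Submodule R R) = I := by rw [smul_eq_mul, Ideal.mul_top]
  intro a b hab
  obtain ⟨f, rfl⟩ := Submodule.Quotient.mk_surjective _ a
  obtain ⟨g, rfl⟩ := Submodule.Quotient.mk_surjective _ b
  simp only at hab
  rw [← Submodule.Quotient.mk_smul, ← Submodule.Quotient.mk_smul, Submodule.Quotient.eq,
    htop] at hab
  rw [Submodule.Quotient.eq, htop]
  have heq : r • f - r • g = r * (f - g) := by
    rw [smul_eq_mul, smul_eq_mul]; ring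
  rw [heq] at hab
  rcases hI.mem_or_mem hab with h | h
  · exact absurd h hr
  · exact h

lemma mem_take_finRange (m i : ℕ) (j : Fin m) :
    j ∈ (List.finRange m).take i ↔ (j : ℕ) < i := by
  constructor
  · intro h
    rw [List.mem_iff_getElem] at h
    obtain ⟨a, ha, rfl⟩ := h
    have ha' : a < min i m := by simpa using ha
    simp only [List.getElem_take, List.getElem_finRange, Fin.cast_mk]
    omega
  · intro h
    rw [List.mem_iff_getElem]
    refine ⟨(j : ℕ), by simp; omega, ?_⟩
    simp only [List.getElem_take, List.getElem_finRange, Fin.cast_mk]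

/-- `E₁, …, E_m` is a regular sequence in `R`. -/
theorem detMinusTsq_isRegularSequence (m : ℕ) (hm : 1 ≤ m) :
    RingTheory.Sequence.IsRegular (genericMatrixRing m)
      ((List.finRange m).map (detMinusTsq m)) := by
  classical
  set rs := (List.finRange m).map (detMinusTsq m) with hrs
  have hlen : rs.length = m := by simp [hrs]
  have htake : ∀ i : ℕ, Ideal.ofList (rs.take i)
      = Ideal.span (detMinusTsq m '' {j : Fin m | (j : ℕ) < i}) := by
    intro i
    rw [hrs, ← List.map_take]
    have hset : {r | r ∈ (((List.finRange m).take i).map (detMinusTsq m))}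
        = detMinusTsq m '' {j : Fin m | (j : ℕ) < i} := by
      ext p
      simp only [List.mem_map, Set.mem_image, Set.mem_setOf_eq]
      constructor
      · rintro ⟨j, hj, rfl⟩
        exact ⟨j, (mem_take_finRange m i j).mp hj, rfl⟩
      · rintro ⟨j, hj, rfl⟩
        exact ⟨j, (mem_take_finRange m i j).mpr hj, rfl⟩
    show Ideal.span _ = _
    rw [hset]
  constructor
  · rw [RingTheory.Sequence.isWeaklyRegular_iff]
    intro i hi
    have him : i < m := by rwa [hlen] at hi
    have hgete : rs[i] = detMinusTsq m ⟨i, him⟩ := by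
      simp [hrs]
    rw [hgete, htake i]
    exact aux_smulreg (prime_prefix m i (le_of_lt him)) (notmem_prefix m i him)
  · intro h
    have htop : Ideal.ofList rs • (⊤ : Submodule (genericMatrixRing m) (genericMatrixRing m))
        = Ideal.ofList rs := by rw [smul_eq_mul, Ideal.mul_top]
    rw [htop] at h
    have hrs_take : rs.take m = rs := List.take_of_length_le (le_of_eq hlen)
    have := htake m
    rw [hrs_take] at this
    rw [this] at h
    exact (prime_prefix m m le_rfl).ne_top h.symm
end

section
/- Let m ≥ 3 be an integer, and for 1 ≤ r ≤ m − 3 let N_m(r) denote the number of r-element sets of pairwise noncrossing diagonals of a convex m-gon. Then Σ_{r=1}^{m−3} (−1)^{r−1} N_m(r) = 1 + (−1)^m. -/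
/-- `x` lies strictly inside the open cyclic arc from `a` to `b` (counterclockwise),
where the vertices of the convex `m`-gon are labeled by `ZMod m` in cyclic order. -/
def InOpenArc (m : ℕ) (a x b : ZMod m) : Prop :=
  0 < (x - a).val ∧ (x - a).val < (b - a).val

/-- `e` is a diagonal of the convex `m`-gon: an unordered pair `{i, j}` of vertices with
`j ∉ {i − 1, i, i + 1}`. -/
def IsDiagonal (m : ℕ) (e : Sym2 (ZMod m)) : Prop :=
  ∃ i j : ZMod m, e = s(i, j) ∧ j ≠ i - 1 ∧ j ≠ i ∧ j ≠ i + 1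

/-- Two chords `{a, b}` and `{c, d}` cross if their endpoints strictly interleave in
cyclic order: one of `c, d` lies in the open arc from `a` to `b` and the other in the
open arc from `b` to `a`. -/
def Crossing (m : ℕ) (e f : Sym2 (ZMod m)) : Prop :=
  ∃ a b c d : ZMod m, e = s(a, b) ∧ f = s(c, d) ∧
    ((InOpenArc m a c b ∧ InOpenArc m b d a) ∨ (InOpenArc m a d b ∧ InOpenArc m b c a))

/-- `N_m(r)`: the number of `r`-element sets of pairwise noncrossing diagonals of a
convex `m`-gon. -/
noncomputable def noncrossingDiagonalSets (m r : ℕ) : ℕ :=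
  Nat.card {S : Finset (Sym2 (ZMod m)) //
    S.card = r ∧ (∀ e ∈ S, IsDiagonal m e) ∧
    ∀ e ∈ S, ∀ f ∈ S, e ≠ f → ¬ Crossing m e f}


namespace NCAux

def cross (e f : ℕ × ℕ) : Prop :=
  (e.1 < f.1 ∧ f.1 < e.2 ∧ e.2 < f.2) ∨ (f.1 < e.1 ∧ e.1 < f.2 ∧ f.2 < e.2)

instance : ∀ e f : ℕ × ℕ, Decidable (cross e f) := fun _ _ => by unfold cross; infer_instance

lemma cross_irrefl (e : ℕ × ℕ) : ¬ cross e e := by unfold cross; omega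

lemma cross_comm {e f : ℕ × ℕ} : cross e f ↔ cross f e := by unfold cross; tauto

def diagSet (m : ℕ) : Finset (ℕ × ℕ) :=
  (Finset.range m ×ˢ Finset.range m).filter fun e => e.1 + 2 ≤ e.2 ∧ e.2 + 2 ≤ e.1 + m

lemma mem_diagSet {m : ℕ} {e : ℕ × ℕ} :
    e ∈ diagSet m ↔ e.1 + 2 ≤ e.2 ∧ e.2 + 2 ≤ e.1 + m ∧ e.2 < m := by
  simp only [diagSet, Finset.mem_filter, Finset.mem_product, Finset.mem_range]
  omega

def ncSets (m : ℕ) : Finset (Finset (ℕ × ℕ)) :=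
  (diagSet m).powerset.filter fun S => ∀ e ∈ S, ∀ f ∈ S, ¬ cross e f

lemma mem_ncSets {m : ℕ} {S : Finset (ℕ × ℕ)} :
    S ∈ ncSets m ↔ S ⊆ diagSet m ∧ ∀ e ∈ S, ∀ f ∈ S, ¬ cross e f := by
  simp [ncSets, Finset.mem_filter, Finset.mem_powerset]

lemma ncSets_mono {m : ℕ} {S T : Finset (ℕ × ℕ)} (hST : S ⊆ T) (hT : T ∈ ncSets m) :
    S ∈ ncSets m := by
  rw [mem_ncSets] at hT ⊢
  exact ⟨hST.trans hT.1, fun e he f hf => hT.2 e (hST he) f (hST hf)⟩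

lemma empty_mem_ncSets (m : ℕ) : (∅ : Finset (ℕ × ℕ)) ∈ ncSets m := by
  simp [mem_ncSets]

def down (e : ℕ × ℕ) : ℕ × ℕ := (e.1 - 1, e.2 - 1)
def up (e : ℕ × ℕ) : ℕ × ℕ := (e.1 + 1, e.2 + 1)

lemma shift_mem {m : ℕ} {S : Finset (ℕ × ℕ)} (hS : S ∈ ncSets m)
    (ha : ∀ e ∈ S, 1 ≤ e.1) (hd : (1, m - 1) ∉ S) :
    S.image down ∈ ncSets (m - 1) ∧ (S.image down).card = S.card := by
  rw [mem_ncSets] at hS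
  have hfacts : ∀ e ∈ S, e.1 + 2 ≤ e.2 ∧ e.2 + 2 ≤ e.1 + m ∧ e.2 < m := fun e he =>
    mem_diagSet.mp (hS.1 he)
  have hinj : Set.InjOn down S := by
    intro e he f hf hef
    have h1 := hfacts e he; have h2 := hfacts f hf
    have := ha e he; have := ha f hf
    simp only [down, Prod.mk.injEq] at hef
    have : e.1 = f.1 ∧ e.2 = f.2 := by omega
    exact Prod.ext this.1 this.2
  refine ⟨mem_ncSets.mpr ⟨?_, ?_⟩, Finset.card_image_of_injOn hinj⟩
  · intro x hx
    obtain ⟨e, he, rfl⟩ := Finset.mem_image.mp hx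
    have h1 := hfacts e he
    have h2 := ha e he
    have h3 : ¬(e.1 = 1 ∧ e.2 = m - 1) := fun hh => hd ((Prod.ext hh.1 hh.2 : e = (1, m - 1)) ▸ he)
    rw [mem_diagSet]
    simp only [down]
    omega
  · intro x hx y hy hxy
    obtain ⟨e, he, rfl⟩ := Finset.mem_image.mp hx
    obtain ⟨f, hf, rfl⟩ := Finset.mem_image.mp hy
    refine hS.2 e he f hf ?_
    have := ha e he; have := ha f hf
    simp only [cross, down] at hxy ⊢
    omega

lemma unshift_notmem {m : ℕ} {S' : Finset (ℕ × ℕ)} (hS' : S' ∈ ncSets (m - 1)) :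
    (1, m - 1) ∉ S'.image up := by
  intro h
  obtain ⟨e, he, heq⟩ := Finset.mem_image.mp h
  have h1 := mem_diagSet.mp ((mem_ncSets.mp hS').1 he)
  simp only [up, Prod.mk.injEq] at heq
  omega

lemma unshift_mem {m : ℕ} {S' : Finset (ℕ × ℕ)} (hm : 4 ≤ m) (hS' : S' ∈ ncSets (m - 1)) :
    insert (1, m - 1) (S'.image up) ∈ ncSets m ∧
      (insert (1, m - 1) (S'.image up)).card = S'.card + 1 := by
  rw [mem_ncSets] at hS'
  have hfacts : ∀ e ∈ S', e.1 + 2 ≤ e.2 ∧ e.2 + 2 ≤ e.1 + (m - 1) ∧ e.2 < m - 1 := fun e he =>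
    mem_diagSet.mp (hS'.1 he)
  have hnm : (1, m - 1) ∉ S'.image up := unshift_notmem (mem_ncSets.mpr hS')
  constructor
  · rw [mem_ncSets]
    constructor
    · intro x hx
      rcases Finset.mem_insert.mp hx with h | h
      · subst h; rw [mem_diagSet]; simp; omega
      · obtain ⟨e, he, rfl⟩ := Finset.mem_image.mp h
        have := hfacts e he
        rw [mem_diagSet]; simp only [up]; omega
    · intro x hx y hy
      rcases Finset.mem_insert.mp hx with h | h <;> rcases Finset.mem_insert.mp hy with h' | h'
      · subst h; subst h'; exact cross_irrefl _
      · subst h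
        obtain ⟨e, he, rfl⟩ := Finset.mem_image.mp h'
        have := hfacts e he
        simp only [cross, up]; omega
      · subst h'
        obtain ⟨e, he, rfl⟩ := Finset.mem_image.mp h
        have := hfacts e he
        simp only [cross, up]; omega
      · obtain ⟨e, he, rfl⟩ := Finset.mem_image.mp h
        obtain ⟨f, hf, rfl⟩ := Finset.mem_image.mp h'
        intro hc
        refine hS'.2 e he f hf ?_
        simp only [cross, up] at hc ⊢; omega
  · rw [Finset.card_insert_of_notMem hnm,
      Finset.card_image_of_injective _ (fun a b hab => by
        simp only [up, Prod.mk.injEq] at hab; exact Prod.ext (by omega) (by omega))]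


lemma card_le_of_mem_ncSets : ∀ m : ℕ, ∀ S ∈ ncSets m, S.card ≤ m - 3 := by
  intro m
  induction m using Nat.strong_induction_on with
  | _ m ih =>
  intro S hS
  rcases Nat.lt_or_ge m 4 with hm | hm
  · -- diagSet m is empty
    have : S = ∅ := by
      rw [Finset.eq_empty_iff_forall_notMem]
      intro e he
      have := mem_diagSet.mp ((mem_ncSets.mp hS).1 he)
      omega
    simp [this]
  by_cases hz : ∀ e ∈ S, 1 ≤ e.1
  · -- Case A: no diagonal at vertex 0
    have h0 := shift_mem (ncSets_mono (Finset.erase_subset _ _) hS)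
      (fun e he => hz e (Finset.mem_of_mem_erase he)) (Finset.notMem_erase _ _)
    have hcard := ih (m - 1) (by omega) _ h0.1
    rw [h0.2] at hcard
    have h1 := Finset.pred_card_le_card_erase (a := (1, m - 1)) (s := S)
    omega
  · -- Case B: some diagonal (0, b)
    push_neg at hz
    obtain ⟨e0, he0, he01⟩ := hz
    have he01 : e0.1 = 0 := by omega
    -- pick the one with minimal second coordinate
    obtain ⟨d, hd, hdmin⟩ := Finset.exists_min_image (S.filter fun e => e.1 = 0) Prod.snd
      ⟨e0, Finset.mem_filter.mpr ⟨he0, he01⟩⟩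
    rw [Finset.mem_filter] at hd
    obtain ⟨hdS, hd1⟩ := hd
    set j := d.2 with hj
    have hdj : d = (0, j) := Prod.ext hd1 rfl
    have hjd := mem_diagSet.mp ((mem_ncSets.mp hS).1 hdS)
    have hj2 : 2 ≤ j := by omega
    have hjm : j + 2 ≤ m := by omega
    have hmin : ∀ f ∈ S, f.1 = 0 → j ≤ f.2 := fun f hf hf1 =>
      hdmin f (Finset.mem_filter.mpr ⟨hf, hf1⟩)
    have hnc := (mem_ncSets.mp hS).2
    set Se := S.erase d with hSe
    have hSesub : ∀ e ∈ Se, e ∈ S ∧ e ≠ d := fun e he =>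
      ⟨Finset.mem_of_mem_erase he, Finset.ne_of_mem_erase he⟩
    set S1 := Se.filter (fun e => e.2 ≤ j) with hS1
    set S2 := Se.filter (fun e => ¬ e.2 ≤ j) with hS2
    -- elements of S1 have first coord ≥ 1
    have hS1f : ∀ e ∈ S1, 1 ≤ e.1 ∧ e.2 ≤ j := by
      intro e he
      rw [hS1, Finset.mem_filter] at he
      obtain ⟨heSe, he2⟩ := he
      obtain ⟨heS, hene⟩ := hSesub e heSe
      refine ⟨?_, he2⟩
      by_contra h
      have he1 : e.1 = 0 := by omega
      have := hmin e heS he1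
      exact hene (by rw [hdj]; exact Prod.ext (by omega) (by omega))
    have hS1mem : S1 ∈ ncSets (j + 1) := by
      rw [mem_ncSets]
      constructor
      · intro e he
        have h1 := hS1f e he
        have h2 := mem_diagSet.mp ((mem_ncSets.mp hS).1
          (Finset.mem_of_mem_erase (Finset.mem_filter.mp he).1))
        rw [mem_diagSet]; omega
      · intro e he f hf
        exact hnc e (Finset.mem_of_mem_erase (Finset.mem_filter.mp he).1) f
          (Finset.mem_of_mem_erase (Finset.mem_filter.mp hf).1)
    -- elements of S2: j < e.2, and e.1 = 0 ∨ j ≤ e.1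
    have hS2f : ∀ e ∈ S2, j < e.2 ∧ (e.1 = 0 ∨ j ≤ e.1) := by
      intro e he
      rw [hS2, Finset.mem_filter] at he
      obtain ⟨heSe, he2⟩ := he
      obtain ⟨heS, _⟩ := hSesub e heSe
      refine ⟨by omega, ?_⟩
      by_contra h
      push_neg at h
      refine hnc d hdS e heS ?_
      rw [hdj]
      simp only [cross]
      omega
    set φ : ℕ × ℕ → ℕ × ℕ := fun e => if e.1 = 0 then (e.2 - j, m - j) else (e.1 - j, e.2 - j)
      with hφ
    have hS2diag : ∀ e ∈ S2, e.1 + 2 ≤ e.2 ∧ e.2 + 2 ≤ e.1 + m ∧ e.2 < m := fun e he =>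
      mem_diagSet.mp ((mem_ncSets.mp hS).1
        (Finset.mem_of_mem_erase (Finset.mem_filter.mp he).1))
    have hφval : ∀ e ∈ S2, (e.1 = 0 ∧ φ e = (e.2 - j, m - j)) ∨
        (j ≤ e.1 ∧ φ e = (e.1 - j, e.2 - j)) := by
      intro e he
      rcases (hS2f e he).2 with ha | ha
      · exact Or.inl ⟨ha, by simp [hφ, ha]⟩
      · exact Or.inr ⟨ha, by simp [hφ, (show ¬ e.1 = 0 by omega)]⟩
    have hφinj : Set.InjOn φ S2 := by
      intro e he f hf hef
      have h1 := hS2f e he; have h2 := hS2f f hf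
      have h3 := hS2diag e he; have h4 := hS2diag f hf
      rcases hφval e he with ⟨ha, hva⟩ | ⟨ha, hva⟩ <;>
        rcases hφval f hf with ⟨hb, hvb⟩ | ⟨hb, hvb⟩ <;>
        rw [hva, hvb] at hef <;> simp only [Prod.mk.injEq] at hef <;>
        exact Prod.ext (by omega) (by omega)
    have hS2mem : S2.image φ ∈ ncSets (m - j + 1) := by
      rw [mem_ncSets]
      constructor
      · intro x hx
        obtain ⟨e, he, rfl⟩ := Finset.mem_image.mp hx
        have h1 := hS2f e he; have h3 := hS2diag e he
        rw [mem_diagSet]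
        rcases hφval e he with ⟨ha, hva⟩ | ⟨ha, hva⟩ <;> rw [hva] <;> simp only [] <;> omega
      · intro x hx y hy hc
        obtain ⟨e, he, rfl⟩ := Finset.mem_image.mp hx
        obtain ⟨f, hf, rfl⟩ := Finset.mem_image.mp hy
        have h1 := hS2f e he; have h2 := hS2f f hf
        have h3 := hS2diag e he; have h4 := hS2diag f hf
        have heS : e ∈ S := Finset.mem_of_mem_erase (Finset.mem_filter.mp he).1
        have hfS : f ∈ S := Finset.mem_of_mem_erase (Finset.mem_filter.mp hf).1
        have hnc' := hnc e heS f hfS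
        rcases hφval e he with ⟨ha, hva⟩ | ⟨ha, hva⟩ <;>
          rcases hφval f hf with ⟨hb, hvb⟩ | ⟨hb, hvb⟩ <;>
          rw [hva, hvb] at hc <;> simp only [cross] at hc hnc' ⊢ <;> omega
    have c1 : S1.card ≤ j + 1 - 3 := ih (j + 1) (by omega) _ hS1mem
    have c2 : S2.card ≤ m - j + 1 - 3 := by
      rw [← Finset.card_image_of_injOn hφinj]
      exact ih (m - j + 1) (by omega) _ hS2mem
    have csplit : S1.card + S2.card = Se.card := Finset.card_filter_add_card_filter_not _
    have cerase : Se.card = S.card - 1 := Finset.card_erase_of_mem hdS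
    have hSne : 1 ≤ S.card := Finset.card_pos.mpr ⟨d, hdS⟩
    omega


def Tsum (m : ℕ) : ℤ := ∑ S ∈ ncSets m, (-1 : ℤ) ^ S.card

lemma neg_one_pow_sub_one {c : ℕ} (hc : 1 ≤ c) : (-1 : ℤ) ^ (c - 1) = -(-1) ^ c := by
  obtain ⟨d, rfl⟩ := Nat.exists_eq_add_of_le hc
  rw [show 1 + d - 1 = d from by omega, pow_add]; ring

def toggle (a : ℕ × ℕ) (S : Finset (ℕ × ℕ)) : Finset (ℕ × ℕ) :=
  if a ∈ S then S.erase a else insert a S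

lemma toggle_toggle (a : ℕ × ℕ) (S : Finset (ℕ × ℕ)) : toggle a (toggle a S) = S := by
  unfold toggle
  by_cases h : a ∈ S
  · rw [if_pos h, if_neg (Finset.notMem_erase a S), Finset.insert_erase h]
  · rw [if_neg h, if_pos (Finset.mem_insert_self a S), Finset.erase_insert h]

lemma toggle_sign (a : ℕ × ℕ) (S : Finset (ℕ × ℕ)) :
    (-1 : ℤ) ^ S.card + (-1 : ℤ) ^ (toggle a S).card = 0 := by
  unfold toggle
  by_cases h : a ∈ S
  · rw [if_pos h, Finset.card_erase_of_mem h,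
      neg_one_pow_sub_one (Finset.card_pos.mpr ⟨a, h⟩)]
    ring
  · rw [if_neg h, Finset.card_insert_of_notMem h, pow_succ]
    ring

lemma toggle_ne (a : ℕ × ℕ) (S : Finset (ℕ × ℕ)) : toggle a S ≠ S := by
  intro h
  by_cases ha : a ∈ S
  · have h2 : a ∉ toggle a S := by unfold toggle; rw [if_pos ha]; exact Finset.notMem_erase a S
    rw [h] at h2; exact h2 ha
  · have h2 : a ∈ toggle a S := by unfold toggle; rw [if_neg ha]; exact Finset.mem_insert_self a S
    rw [h] at h2; exact ha h2

lemma mem_toggle_of_ne {a b : ℕ × ℕ} {S : Finset (ℕ × ℕ)} (h : b ≠ a) :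
    b ∈ toggle a S ↔ b ∈ S := by
  unfold toggle
  by_cases ha : a ∈ S
  · rw [if_pos ha, Finset.mem_erase]; simp [h]
  · rw [if_neg ha, Finset.mem_insert]; simp [h]

lemma toggle_filter {a : ℕ × ℕ} {S : Finset (ℕ × ℕ)} {p : ℕ × ℕ → Prop} [DecidablePred p]
    (hp : ¬ p a) : (toggle a S).filter p = S.filter p := by
  unfold toggle
  by_cases ha : a ∈ S
  · rw [if_pos ha, Finset.filter_erase, Finset.erase_eq_of_notMem]
    simp [hp]
  · rw [if_neg ha, Finset.filter_insert, if_neg hp]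

lemma toggle_mem_ncSets {m : ℕ} {a : ℕ × ℕ} {S : Finset (ℕ × ℕ)} (hS : S ∈ ncSets m)
    (had : a ∈ diagSet m) (hnc : ∀ e ∈ S, ¬ cross a e ∧ ¬ cross e a) :
    toggle a S ∈ ncSets m := by
  unfold toggle
  rw [mem_ncSets] at hS
  by_cases h : a ∈ S
  · rw [if_pos h]
    exact ncSets_mono (Finset.erase_subset _ _) (mem_ncSets.mpr hS)
  · rw [if_neg h, mem_ncSets]
    refine ⟨Finset.insert_subset had hS.1, ?_⟩
    intro e he f hf
    rcases Finset.mem_insert.mp he with he' | he' <;> rcases Finset.mem_insert.mp hf with hf' | hf'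
    · rw [he', hf']; exact cross_irrefl _
    · rw [he']; exact (hnc f hf').1
    · rw [hf']; exact (hnc e he').2
    · exact hS.2 e he' f hf'

/-- The set of second coordinates of elements of `S` whose first coordinate is 1. -/
def jset (S : Finset (ℕ × ℕ)) : Finset ℕ := (S.filter fun e => e.1 = 1).image Prod.snd

lemma jset_toggle {a : ℕ × ℕ} {S : Finset (ℕ × ℕ)} (h : a.1 ≠ 1) :
    jset (toggle a S) = jset S := by
  unfold jset
  rw [toggle_filter h]

lemma mem_jset {S : Finset (ℕ × ℕ)} {b : ℕ} : b ∈ jset S ↔ (1, b) ∈ S := by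
  unfold jset
  simp only [Finset.mem_image, Finset.mem_filter]
  constructor
  · rintro ⟨e, ⟨heS, he1⟩, rfl⟩
    have : e = (1, e.2) := Prod.ext he1 rfl
    rwa [← this]
  · intro h
    exact ⟨(1, b), ⟨h, rfl⟩, rfl⟩

lemma sup_jset_mem {S : Finset (ℕ × ℕ)} (h : (jset S).Nonempty) :
    (jset S).sup id ∈ jset S := by
  rw [← Finset.sup'_eq_sup h, ← Finset.max'_eq_sup' ]
  exact Finset.max'_mem _ h

lemma le_sup_jset {S : Finset (ℕ × ℕ)} {b : ℕ} (h : b ∈ jset S) : b ≤ (jset S).sup id :=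
  Finset.le_sup (f := id) h

lemma Tsum_rec {m : ℕ} (hm : 4 ≤ m) : Tsum m = - Tsum (m - 1) := by
  classical
  have hsplit := Finset.sum_filter_add_sum_filter_not (ncSets m)
    (fun S => (jset S).Nonempty) (fun S => (-1 : ℤ) ^ S.card)
  -- Step 1 : sum over sets with no diagonal at vertex 1 vanishes
  have step1 : ∑ S ∈ (ncSets m).filter (fun S => ¬ (jset S).Nonempty), (-1 : ℤ) ^ S.card
      = 0 := by
    refine Finset.sum_involution (fun S _ => toggle (0, 2) S) (fun S _ => toggle_sign _ S)
      (fun S _ _ => toggle_ne _ S) ?_ (fun S _ => toggle_toggle _ S)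
    intro S hS
    rw [Finset.mem_filter] at hS ⊢
    obtain ⟨hS1, hS2⟩ := hS
    constructor
    · refine toggle_mem_ncSets hS1 (mem_diagSet.mpr (by simp; omega)) ?_
      intro e he
      have hd := mem_diagSet.mp ((mem_ncSets.mp hS1).1 he)
      have he1 : e.1 ≠ 1 := by
        intro h1
        exact hS2 ⟨e.2, mem_jset.mpr (by rwa [(Prod.ext h1 rfl : e = (1, e.2)).symm])⟩
      simp only [cross]
      omega
    · rw [jset_toggle (by norm_num)]
      exact hS2
  -- Step 2 : within sets having a diagonal at vertex 1, those not containing (1, m-1) cancel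
  have hsplit2 := Finset.sum_filter_add_sum_filter_not
    ((ncSets m).filter (fun S => (jset S).Nonempty))
    (fun S => (1, m - 1) ∈ S) (fun S => (-1 : ℤ) ^ S.card)
  have step2 : ∑ S ∈ ((ncSets m).filter (fun S => (jset S).Nonempty)).filter
      (fun S => ¬ (1, m - 1) ∈ S), (-1 : ℤ) ^ S.card = 0 := by
    refine Finset.sum_involution (fun S _ => toggle (0, (jset S).sup id) S)
      (fun S _ => toggle_sign _ S) (fun S _ _ => toggle_ne _ S) ?_ ?_
    · intro S hS
      rw [Finset.mem_filter, Finset.mem_filter] at hS ⊢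
      obtain ⟨⟨hS1, hS2⟩, hS3⟩ := hS
      have hjmem : (1, (jset S).sup id) ∈ S := mem_jset.mp (sup_jset_mem hS2)
      have hjd : 1 + 2 ≤ (jset S).sup id ∧ (jset S).sup id + 2 ≤ 1 + m ∧ (jset S).sup id < m :=
        mem_diagSet.mp ((mem_ncSets.mp hS1).1 hjmem)
      have hjne : (jset S).sup id ≠ m - 1 := by
        intro h
        exact hS3 (h ▸ hjmem)
      refine ⟨⟨toggle_mem_ncSets hS1 (mem_diagSet.mpr
        ⟨by omega, by omega, by omega⟩) ?_, ?_⟩, ?_⟩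
      · intro e he
        have hd := mem_diagSet.mp ((mem_ncSets.mp hS1).1 he)
        by_cases he1 : e.1 = 1
        · have : e.2 ≤ (jset S).sup id := le_sup_jset (mem_jset.mpr
            (by rwa [(Prod.ext he1 rfl : e = (1, e.2)).symm]))
          simp only [cross]; omega
        · have hncjf := (mem_ncSets.mp hS1).2 (1, (jset S).sup id) hjmem e he
          simp only [cross] at hncjf ⊢
          omega
      · rw [jset_toggle (by norm_num)]
        exact hS2
      · rw [mem_toggle_of_ne]
        · exact hS3
        · simp [Prod.ext_iff]
    · intro S hS
      have h1 : jset (toggle (0, (jset S).sup id) S) = jset S := jset_toggle (by norm_num)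
      show toggle (0, (jset (toggle (0, (jset S).sup id) S)).sup id)
        (toggle (0, (jset S).sup id) S) = S
      rw [h1, toggle_toggle]
  -- Step 3 : sets containing (1, m-1) biject with ncSets (m-1)
  have hfilter_eq : ((ncSets m).filter (fun S => (jset S).Nonempty)).filter
      (fun S => (1, m - 1) ∈ S) = (ncSets m).filter (fun S => (1, m - 1) ∈ S) := by
    ext S
    simp only [Finset.mem_filter, and_assoc]
    constructor
    · tauto
    · rintro ⟨h1, h2⟩
      exact ⟨h1, ⟨m - 1, mem_jset.mpr h2⟩, h2⟩
  have step3 : ∑ S ∈ (ncSets m).filter (fun S => (1, m - 1) ∈ S), (-1 : ℤ) ^ S.card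
      = - Tsum (m - 1) := by
    rw [Tsum, ← Finset.sum_neg_distrib]
    refine Finset.sum_nbij' (fun S => (S.erase (1, m - 1)).image down)
      (fun S' => insert (1, m - 1) (S'.image up)) ?_ ?_ ?_ ?_ ?_
    · intro S hS
      rw [Finset.mem_filter] at hS
      obtain ⟨hS1, hS2⟩ := hS
      have ha : ∀ e ∈ S.erase (1, m - 1), 1 ≤ e.1 := by
        intro e he
        obtain ⟨hene, heS⟩ := Finset.mem_erase.mp he
        by_contra h
        have he1 : e.1 = 0 := by omega
        have hd := mem_diagSet.mp ((mem_ncSets.mp hS1).1 heS)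
        refine (mem_ncSets.mp hS1).2 (1, m - 1) hS2 e heS ?_
        have hne2 : ¬(e.1 = 1 ∧ e.2 = m - 1) := by
          intro hh; exact hene (Prod.ext hh.1 hh.2 : e = (1, m - 1))
        simp only [cross]
        have hdm := mem_diagSet.mp ((mem_ncSets.mp hS1).1 hS2)
        simp only at hdm
        omega
      exact (shift_mem (ncSets_mono (Finset.erase_subset _ _) hS1) ha
        (Finset.notMem_erase _ _)).1
    · intro S' hS'
      rw [Finset.mem_filter]
      exact ⟨(unshift_mem hm hS').1, Finset.mem_insert_self _ _⟩
    · intro S hS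
      rw [Finset.mem_filter] at hS
      obtain ⟨hS1, hS2⟩ := hS
      have hup : ∀ e ∈ S.erase (1, m - 1), up (down e) = e := by
        intro e he
        have hd := mem_diagSet.mp ((mem_ncSets.mp hS1).1 (Finset.mem_of_mem_erase he))
        -- we need 1 ≤ e.1 : same argument as above
        obtain ⟨hene, heS⟩ := Finset.mem_erase.mp he
        have h1 : 1 ≤ e.1 := by
          by_contra h
          have he1 : e.1 = 0 := by omega
          refine absurd ((mem_ncSets.mp hS1).2 (1, m - 1) hS2 e heS) (fun hc => hc ?_)
          have hne2 : ¬(e.1 = 1 ∧ e.2 = m - 1) := by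
            intro hh; exact hene (Prod.ext hh.1 hh.2 : e = (1, m - 1))
          have hdm := mem_diagSet.mp ((mem_ncSets.mp hS1).1 hS2)
          simp only at hdm
          simp only [cross]
          omega
        simp only [up, down]
        exact Prod.ext (by simp; omega) (by simp; omega)
      show insert (1, m - 1) (((S.erase (1, m - 1)).image down).image up) = S
      rw [Finset.image_image,
        Finset.image_congr (f := up ∘ down) (g := id) (fun e he => hup e he), Finset.image_id]
      exact Finset.insert_erase hS2
    · intro S' hS'
      show ((insert (1, m - 1) (S'.image up)).erase (1, m - 1)).image down = S'
      rw [Finset.erase_insert (unshift_notmem hS'), Finset.image_image]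
      have hdu : ∀ e ∈ S', down (up e) = e := by
        intro e he
        simp only [down, up]
        exact Prod.ext (by simp) (by simp)
      rw [Finset.image_congr (f := down ∘ up) (g := id) (fun e he => hdu e he), Finset.image_id]
    · intro S hS
      rw [Finset.mem_filter] at hS
      obtain ⟨hS1, hS2⟩ := hS
      have ha : ∀ e ∈ S.erase (1, m - 1), 1 ≤ e.1 := by
        intro e he
        obtain ⟨hene, heS⟩ := Finset.mem_erase.mp he
        by_contra h
        have he1 : e.1 = 0 := by omega
        have hd := mem_diagSet.mp ((mem_ncSets.mp hS1).1 heS)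
        refine (mem_ncSets.mp hS1).2 (1, m - 1) hS2 e heS ?_
        have hne2 : ¬(e.1 = 1 ∧ e.2 = m - 1) := by
          intro hh; exact hene (Prod.ext hh.1 hh.2 : e = (1, m - 1))
        have hdm := mem_diagSet.mp ((mem_ncSets.mp hS1).1 hS2)
        simp only at hdm
        simp only [cross]
        omega
      have hcard := (shift_mem (ncSets_mono (Finset.erase_subset _ _) hS1) ha
        (Finset.notMem_erase _ _)).2
      rw [hcard, Finset.card_erase_of_mem hS2,
        neg_one_pow_sub_one (Finset.card_pos.mpr ⟨_, hS2⟩)]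
      ring
  rw [Tsum, ← hsplit, ← hsplit2, step1, step2, hfilter_eq, step3]
  ring

lemma Tsum_three : Tsum 3 = 1 := by
  have h : diagSet 3 = ∅ := by
    rw [Finset.eq_empty_iff_forall_notMem]
    intro e he
    have := mem_diagSet.mp he
    omega
  have h2 : ncSets 3 = {∅} := by
    unfold ncSets
    rw [h, Finset.powerset_empty, Finset.filter_singleton, if_pos (by simp)]
  rw [Tsum, h2]
  simp

lemma Tsum_eq (m : ℕ) (hm : 3 ≤ m) : Tsum m = (-1 : ℤ) ^ (m - 1) := by
  induction m, hm using Nat.le_induction with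
  | base => rw [Tsum_three]; norm_num
  | succ n hn ih =>
    have h1 : Tsum (n + 1) = - Tsum n := by
      have := Tsum_rec (m := n + 1) (by omega)
      simpa using this
    rw [h1, ih]
    have h2 : n + 1 - 1 = (n - 1) + 1 := by omega
    rw [h2, pow_succ]
    ring


/-! ### Transfer to the `ZMod` world -/

section Transfer

variable {m : ℕ}

lemma natCast_val_self [NeZero m] (i : ZMod m) : ((i.val : ℕ) : ZMod m) = i := by
  rw [ZMod.natCast_val, ZMod.cast_id]

lemma val_cast_sub (hm : 0 < m) {A X : ℕ} (hX : X < m) (hA : A < m) :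
    ((X : ZMod m) - (A : ZMod m)).val = if A ≤ X then X - A else X + m - A := by
  haveI : NeZero m := ⟨by omega⟩
  split_ifs with h
  · rw [← Nat.cast_sub h, ZMod.val_cast_of_lt (by omega)]
  · have heq : (X : ZMod m) - (A : ZMod m) = ((X + m - A : ℕ) : ZMod m) := by
      rw [Nat.cast_sub (by omega), Nat.cast_add, ZMod.natCast_self, add_zero]
    rw [heq, ZMod.val_cast_of_lt (by omega)]

lemma inOpenArc_iff (hm : 0 < m) {A B X : ℕ} (hA : A < m) (hB : B < m) (hX : X < m)
    (hAB : A < B) :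
    InOpenArc m (A : ZMod m) (X : ZMod m) (B : ZMod m) ↔ A < X ∧ X < B := by
  unfold InOpenArc
  rw [val_cast_sub hm hX hA, val_cast_sub hm hB hA]
  split_ifs <;> omega

lemma inOpenArc_rev_iff (hm : 0 < m) {A B X : ℕ} (hA : A < m) (hB : B < m) (hX : X < m)
    (hAB : A < B) :
    InOpenArc m (B : ZMod m) (X : ZMod m) (A : ZMod m) ↔ X < A ∨ B < X := by
  unfold InOpenArc
  rw [val_cast_sub hm hX hB, val_cast_sub hm hA hB]
  split_ifs <;> omega

lemma crossing_expand {a b c d : ZMod m} :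
    Crossing m s(a, b) s(c, d) ↔
      ((InOpenArc m a c b ∧ InOpenArc m b d a) ∨ (InOpenArc m a d b ∧ InOpenArc m b c a)) := by
  constructor
  · rintro ⟨a', b', c', d', h1, h2, h3⟩
    rcases Sym2.eq_iff.mp h1 with ⟨rfl, rfl⟩ | ⟨rfl, rfl⟩ <;>
      rcases Sym2.eq_iff.mp h2 with ⟨rfl, rfl⟩ | ⟨rfl, rfl⟩ <;> tauto
  · intro h
    exact ⟨a, b, c, d, rfl, rfl, h⟩

lemma isDiagonal_expand {i j : ZMod m} :
    IsDiagonal m s(i, j) ↔ (j ≠ i - 1 ∧ j ≠ i ∧ j ≠ i + 1) := by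
  constructor
  · rintro ⟨i', j', h1, h2, h3, h4⟩
    rcases Sym2.eq_iff.mp h1 with ⟨rfl, rfl⟩ | ⟨rfl, rfl⟩
    · exact ⟨h2, h3, h4⟩
    · refine ⟨fun h => h4 ?_, fun h => h3 h.symm, fun h => h2 ?_⟩
      · rw [h]; ring
      · rw [h]; ring
  · intro h
    exact ⟨i, j, rfl, h.1, h.2.1, h.2.2⟩

lemma cast_eq_cast_iff (hm : 0 < m) {x y : ℕ} (hx : x ≤ m) (hy : y < m) :
    ((x : ZMod m) = (y : ZMod m)) ↔ (x = y ∨ (x = m ∧ y = 0)) := by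
  rw [ZMod.natCast_eq_natCast_iff']
  rcases Nat.lt_or_ge x m with h | h
  · rw [Nat.mod_eq_of_lt h, Nat.mod_eq_of_lt hy]
    omega
  · have hxm : x = m := by omega
    subst hxm
    rw [Nat.mod_self, Nat.mod_eq_of_lt hy]
    omega

lemma isDiag_iff_natpair (hm : 3 ≤ m) {A B : ℕ} (hB : B < m) (hAB : A < B) :
    IsDiagonal m s((A : ZMod m), (B : ZMod m)) ↔ (A, B) ∈ diagSet m := by
  haveI : NeZero m := ⟨by omega⟩
  rw [isDiagonal_expand, mem_diagSet]
  have h1 : ((B : ZMod m) = (A : ZMod m) - 1) ↔ ((B + 1 : ℕ) : ZMod m) = (A : ZMod m) := by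
    rw [eq_sub_iff_add_eq]
    push_cast
    rfl
  have h2 : ((B : ZMod m) = (A : ZMod m) + 1) ↔ ((A + 1 : ℕ) : ZMod m) = (B : ZMod m) := by
    push_cast
    constructor <;> intro h <;> rw [h]
  have h0 : 0 < m := by omega
  simp only [ne_eq, h1, h2,
    cast_eq_cast_iff h0 (show B + 1 ≤ m by omega) (show A < m by omega),
    cast_eq_cast_iff h0 (show B ≤ m by omega) (show A < m by omega),
    cast_eq_cast_iff h0 (show A + 1 ≤ m by omega) hB]
  show _ ↔ A + 2 ≤ B ∧ B + 2 ≤ A + m ∧ B < m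
  omega

lemma crossing_iff_natpair (hm : 3 ≤ m) {A B C D : ℕ} (hAB : A < B) (hB : B < m)
    (hCD : C < D) (hD : D < m) :
    Crossing m s((A : ZMod m), (B : ZMod m)) s((C : ZMod m), (D : ZMod m)) ↔
      cross (A, B) (C, D) := by
  have h0 : 0 < m := by omega
  rw [crossing_expand,
    inOpenArc_iff h0 (by omega) hB (by omega) hAB,
    inOpenArc_rev_iff h0 (by omega) hB hD hAB,
    inOpenArc_iff h0 (by omega) hB hD hAB,
    inOpenArc_rev_iff h0 (by omega) hB (by omega) hAB]
  simp only [cross]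
  omega

/-- Map a chord to its ordered pair of vertex labels. -/
def toPair (m : ℕ) : Sym2 (ZMod m) → ℕ × ℕ :=
  Sym2.lift ⟨fun i j => (min i.val j.val, max i.val j.val), fun i j => by
    simp [min_comm, max_comm]⟩

lemma toPair_mk (i j : ZMod m) : toPair m s(i, j) = (min i.val j.val, max i.val j.val) := rfl

lemma toPair_cast {A B : ℕ} (hA : A < m) (hB : B < m) (hAB : A < B) :
    toPair m s((A : ZMod m), (B : ZMod m)) = (A, B) := by
  rw [toPair_mk, ZMod.val_cast_of_lt hA, ZMod.val_cast_of_lt hB,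
    min_eq_left (le_of_lt hAB), max_eq_right (le_of_lt hAB)]

lemma diag_repr (hm : 3 ≤ m) {e : Sym2 (ZMod m)} (h : IsDiagonal m e) :
    ∃ A B : ℕ, A < B ∧ B < m ∧ e = s((A : ZMod m), (B : ZMod m)) ∧ toPair m e = (A, B) := by
  haveI : NeZero m := ⟨by omega⟩
  obtain ⟨i, j, rfl, h1, h2, h3⟩ := h
  have hij : i.val ≠ j.val := by
    intro hv
    exact h2 (ZMod.val_injective m hv).symm
  rcases Nat.lt_or_ge i.val j.val with hlt | hge
  · exact ⟨i.val, j.val, hlt, ZMod.val_lt j,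
      by rw [natCast_val_self, natCast_val_self],
      by rw [toPair_mk]; congr 1 <;> omega⟩
  · have hlt : j.val < i.val := by omega
    refine ⟨j.val, i.val, hlt, ZMod.val_lt i, ?_, by rw [toPair_mk]; congr 1 <;> omega⟩
    rw [natCast_val_self, natCast_val_self, Sym2.eq_swap]

end Transfer


lemma toPair_inj {m : ℕ} (hm : 3 ≤ m) {e f : Sym2 (ZMod m)} (he : IsDiagonal m e)
    (hf : IsDiagonal m f) (h : toPair m e = toPair m f) : e = f := by
  obtain ⟨A, B, h1, h2, h3, h4⟩ := diag_repr hm he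
  obtain ⟨A', B', h1', h2', h3', h4'⟩ := diag_repr hm hf
  rw [h4, h4'] at h
  obtain ⟨rfl, rfl⟩ : A = A' ∧ B = B' := by simpa [Prod.ext_iff] using h
  rw [h3, h3']

lemma count_transfer (m r : ℕ) (hm : 3 ≤ m) :
    noncrossingDiagonalSets m r = ((ncSets m).filter fun S => S.card = r).card := by
  classical
  haveI : NeZero m := ⟨by omega⟩
  rw [noncrossingDiagonalSets, Nat.card_eq_fintype_card, Fintype.card_subtype]
  refine Finset.card_bij (fun S _ => S.image (toPair m)) ?_ ?_ ?_
  · -- membership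
    intro S hS
    rw [Finset.mem_filter] at hS
    have hcard := hS.2.1
    have hdiag := hS.2.2.1
    have hcross := hS.2.2.2
    have hinj : Set.InjOn (toPair m) S := fun e he f hf h =>
      toPair_inj hm (hdiag e he) (hdiag f hf) h
    rw [Finset.mem_filter]
    refine ⟨mem_ncSets.mpr ⟨?_, ?_⟩, by rw [Finset.card_image_of_injOn hinj, hcard]⟩
    · intro x hx
      obtain ⟨e, he, rfl⟩ := Finset.mem_image.mp hx
      obtain ⟨A, B, h1, h2, h3, h4⟩ := diag_repr hm (hdiag e he)
      rw [h4]
      exact (isDiag_iff_natpair hm h2 h1).mp (h3 ▸ hdiag e he)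
    · intro x hx y hy hc
      obtain ⟨e, he, rfl⟩ := Finset.mem_image.mp hx
      obtain ⟨f, hf, rfl⟩ := Finset.mem_image.mp hy
      by_cases hef : e = f
      · subst hef; exact cross_irrefl _ hc
      · obtain ⟨A, B, h1, h2, h3, h4⟩ := diag_repr hm (hdiag e he)
        obtain ⟨A', B', h1', h2', h3', h4'⟩ := diag_repr hm (hdiag f hf)
        rw [h4, h4'] at hc
        refine hcross e he f hf hef ?_
        rw [h3, h3']
        exact (crossing_iff_natpair hm h1 h2 h1' h2').mpr hc
  · -- injectivity
    intro S hS T hT h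
    replace h : S.image (toPair m) = T.image (toPair m) := h
    rw [Finset.mem_filter] at hS hT
    have hdS := hS.2.2.1
    have hdT := hT.2.2.1
    ext e
    constructor
    · intro he
      have : toPair m e ∈ T.image (toPair m) := h ▸ Finset.mem_image_of_mem _ he
      obtain ⟨f, hf, hfe⟩ := Finset.mem_image.mp this
      rwa [← toPair_inj hm (hdT f hf) (hdS e he) hfe]
    · intro he
      have : toPair m e ∈ S.image (toPair m) := h ▸ Finset.mem_image_of_mem _ he
      obtain ⟨f, hf, hfe⟩ := Finset.mem_image.mp this
      rwa [← toPair_inj hm (hdS f hf) (hdT e he) hfe]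
  · -- surjectivity
    intro S' hS'
    rw [Finset.mem_filter] at hS'
    obtain ⟨hS1, hS2⟩ := hS'
    rw [mem_ncSets] at hS1
    have hfacts : ∀ p ∈ S', p.1 < p.2 ∧ p.2 < m := by
      intro p hp
      have := mem_diagSet.mp (hS1.1 hp)
      omega
    have htp : ∀ p ∈ S', toPair m s((p.1 : ZMod m), (p.2 : ZMod m)) = p := by
      intro p hp
      obtain ⟨hp1, hp2⟩ := hfacts p hp
      rw [toPair_cast (by omega) hp2 hp1]
    have hmkinj : Set.InjOn (fun p : ℕ × ℕ => s((p.1 : ZMod m), (p.2 : ZMod m))) S' := by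
      intro p hp q hq hpq
      rw [← htp p hp, ← htp q hq]
      simp only at hpq
      rw [hpq]
    refine ⟨S'.image (fun p => s((p.1 : ZMod m), (p.2 : ZMod m))), ?_, ?_⟩
    · rw [Finset.mem_filter]
      refine ⟨Finset.mem_univ _, ?_, ?_, ?_⟩
      · rw [Finset.card_image_of_injOn hmkinj]; exact hS2
      · intro e he
        obtain ⟨p, hp, rfl⟩ := Finset.mem_image.mp he
        obtain ⟨hp1, hp2⟩ := hfacts p hp
        exact (isDiag_iff_natpair hm hp2 hp1).mpr (by simpa using hS1.1 hp)
      · intro e he f hf hef hc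
        obtain ⟨p, hp, rfl⟩ := Finset.mem_image.mp he
        obtain ⟨q, hq, rfl⟩ := Finset.mem_image.mp hf
        obtain ⟨hp1, hp2⟩ := hfacts p hp
        obtain ⟨hq1, hq2⟩ := hfacts q hq
        refine hS1.2 p hp q hq ?_
        have := (crossing_iff_natpair hm hp1 hp2 hq1 hq2).mp hc
        simpa using this
    · show (S'.image fun p => s((p.1 : ZMod m), (p.2 : ZMod m))).image (toPair m) = S'
      rw [Finset.image_image,
        Finset.image_congr (f := toPair m ∘ fun p : ℕ × ℕ => s((p.1 : ZMod m), (p.2 : ZMod m)))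
          (g := id) (fun p hp => htp p hp), Finset.image_id]

end NCAux

/-- `Σ_{r=1}^{m−3} (−1)^{r−1} N_m(r) = 1 + (−1)^m`. -/
theorem alternating_sum_noncrossing_diagonal_sets (m : ℕ) (hm : 3 ≤ m) :
    ∑ r ∈ Finset.Icc 1 (m - 3), (-1 : ℤ) ^ (r - 1) * noncrossingDiagonalSets m r
      = 1 + (-1) ^ m := by
  classical
  open NCAux in
  have hfib : ∑ r ∈ Finset.range (m - 2),
      ((-1 : ℤ) ^ r * (((ncSets m).filter fun S => S.card = r).card : ℤ)) = Tsum m := by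
    rw [Tsum, ← Finset.sum_fiberwise_of_maps_to (g := Finset.card)
      (t := Finset.range (m - 2)) (fun S hS => Finset.mem_range.mpr
        (by have := card_le_of_mem_ncSets m S hS; omega)) (fun S => (-1 : ℤ) ^ S.card)]
    refine Finset.sum_congr rfl fun r hr => ?_
    have hconst : ∀ S ∈ (ncSets m).filter (fun S => S.card = r),
        (-1 : ℤ) ^ S.card = (-1) ^ r := by
      intro S hS; rw [(Finset.mem_filter.mp hS).2]
    rw [Finset.sum_congr rfl hconst, Finset.sum_const, nsmul_eq_mul, mul_comm]
  have h0 : ((NCAux.ncSets m).filter fun S => S.card = 0).card = 1 := by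
    have he : (NCAux.ncSets m).filter (fun S => S.card = 0) = {∅} := by
      ext S
      simp only [Finset.mem_filter, Finset.mem_singleton, Finset.card_eq_zero]
      constructor
      · rintro ⟨_, h⟩; exact h
      · rintro rfl; exact ⟨NCAux.empty_mem_ncSets m, rfl⟩
    rw [he, Finset.card_singleton]
  have hsplit : Finset.range (m - 2) = insert 0 (Finset.Icc 1 (m - 3)) := by
    ext r
    simp only [Finset.mem_range, Finset.mem_insert, Finset.mem_Icc]
    omega
  have h0notin : (0 : ℕ) ∉ Finset.Icc 1 (m - 3) := by simp
  rw [hsplit, Finset.sum_insert h0notin, NCAux.Tsum_eq m hm, h0] at hfib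
  simp only [pow_zero, one_mul, Nat.cast_one] at hfib
  have hgoal : ∑ r ∈ Finset.Icc 1 (m - 3),
      (-1 : ℤ) ^ (r - 1) * (noncrossingDiagonalSets m r : ℤ)
      = - ∑ r ∈ Finset.Icc 1 (m - 3),
        ((-1 : ℤ) ^ r * (((NCAux.ncSets m).filter fun S => S.card = r).card : ℤ)) := by
    rw [← Finset.sum_neg_distrib]
    refine Finset.sum_congr rfl fun r hr => ?_
    have hr1 : 1 ≤ r := (Finset.mem_Icc.mp hr).1
    rw [NCAux.count_transfer m r hm, NCAux.neg_one_pow_sub_one hr1]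
    ring
  rw [hgoal]
  have hm1 : (-1 : ℤ) ^ m = -(-1) ^ (m - 1) := by
    conv_lhs => rw [show m = (m - 1) + 1 from by omega]
    rw [pow_succ]; ring
  rw [hm1]
  linarith [hfib]
end
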